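/- arXiv:1911.12874 — 3 statements merged into one kernel-verified Lean document; each statement's English description precedes it below -/
import Mathlib

section
/- Let λ ∈ (0,1) and let K, L, M ⊂ ℝ be non-empty sets such that (1-λ)K + λL ⊆ M, and suppose M = ⋃_{i=1}^s [a_i, b_i] is a finite union of pairwise disjoint compact intervals. Then G_1(M) + Z(M) ≥ (1-λ)G_1(K) + λG_1(L), where Z(M) is the number of non-integer endpoints among a_1,…,a_s,b_1,…,b_s. -/
open Set
open scoped Pointwise Classical

/-- The lattice point enumerator on `ℝ`. -/
noncomputable def latticeEnum1 (M : Set ℝ) : ℕ := (M ∩ {x : ℝ | ∃ z : ℤ, x = z}).ncard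

lemma latticeEnum1_eq (S : Set ℝ) :
    latticeEnum1 S = {z : ℤ | (z : ℝ) ∈ S}.ncard := by
  have h : S ∩ {x : ℝ | ∃ z : ℤ, x = z} = (fun z : ℤ => (z : ℝ)) '' {z : ℤ | (z : ℝ) ∈ S} := by
    ext x
    constructor
    · rintro ⟨hx, z, rfl⟩
      exact ⟨z, hx, rfl⟩
    · rintro ⟨z, hz, rfl⟩
      exact ⟨hz, z, rfl⟩
  rw [latticeEnum1, h, Set.ncard_image_of_injective _ Int.cast_injective]

lemma intpts_Icc (aa bb : ℝ) :
    {z : ℤ | (z : ℝ) ∈ Set.Icc aa bb} = ↑(Finset.Icc ⌈aa⌉ ⌊bb⌋) := by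
  ext z
  simp [Int.ceil_le, Int.le_floor]

lemma card_bound (A : Finset ℤ) (h : A.Nonempty) :
    (A.card : ℝ) ≤ ((A.max' h : ℤ) : ℝ) - ((A.min' h : ℤ) : ℝ) + 1 := by
  have hsub : A ⊆ Finset.Icc (A.min' h) (A.max' h) :=
    fun z hz => Finset.mem_Icc.mpr ⟨A.min'_le z hz, A.le_max' z hz⟩
  have hc := Finset.card_le_card hsub
  rw [Int.card_Icc] at hc
  have hmm : A.min' h ≤ A.max' h := A.min'_le _ (A.max'_mem h)
  have h2 : ((A.max' h + 1 - A.min' h).toNat : ℤ) = A.max' h + 1 - A.min' h :=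
    Int.toNat_of_nonneg (by omega)
  have h3 : (A.card : ℤ) ≤ A.max' h + 1 - A.min' h := by
    rw [← h2]; exact_mod_cast hc
  have h4 : (A.card : ℝ) ≤ ((A.max' h : ℤ) : ℝ) + 1 - ((A.min' h : ℤ) : ℝ) := by
    exact_mod_cast h3
  linarith

lemma core (lam aa bb : ℝ) (h0 : 0 < lam) (h1 : lam < 1) (hab : aa ≤ bb)
    (A B : Finset ℤ) (kq lp : ℝ)
    (hA : ∀ z ∈ A, (1 - lam) * (z : ℝ) + lam * lp ∈ Set.Icc aa bb)
    (hB : ∀ z ∈ B, (1 - lam) * kq + lam * (z : ℝ) ∈ Set.Icc aa bb)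
    (hAk : ∀ z ∈ A, (z : ℝ) ≤ kq) (hBl : ∀ z ∈ B, lp ≤ (z : ℝ)) :
    (1 - lam) * A.card + lam * B.card ≤ (bb - aa) + 1 := by
  have hml : 0 < 1 - lam := by linarith
  rcases A.eq_empty_or_nonempty with hAe | hAne
  · rcases B.eq_empty_or_nonempty with hBe | hBne
    · simp [hAe, hBe]; linarith
    · have hmin := hB _ (B.min'_mem hBne)
      have hmax := hB _ (B.max'_mem hBne)
      rw [Set.mem_Icc] at hmin hmax
      have hc := card_bound B hBne
      simp only [hAe, Finset.card_empty, Nat.cast_zero, mul_zero, zero_add]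
      nlinarith [hmin.1, hmax.2, hc]
  · rcases B.eq_empty_or_nonempty with hBe | hBne
    · have hmin := hA _ (A.min'_mem hAne)
      have hmax := hA _ (A.max'_mem hAne)
      rw [Set.mem_Icc] at hmin hmax
      have hc := card_bound A hAne
      simp only [hBe, Finset.card_empty, Nat.cast_zero, mul_zero, add_zero]
      nlinarith [hmin.1, hmax.2, hc]
    · have hminA := hA _ (A.min'_mem hAne)
      have hmaxB := hB _ (B.max'_mem hBne)
      rw [Set.mem_Icc] at hminA hmaxB
      have hcA := card_bound A hAne
      have hcB := card_bound B hBne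
      have hAmax : ((A.max' hAne : ℤ) : ℝ) ≤ kq := hAk _ (A.max'_mem hAne)
      have hBmin : lp ≤ ((B.min' hBne : ℤ) : ℝ) := hBl _ (B.min'_mem hBne)
      nlinarith [hminA.1, hmaxB.2, hcA, hcB]

lemma count_bound (aa bb : ℝ) (hab : aa ≤ bb) :
    bb - aa + 1 ≤ (((⌊bb⌋ + 1 - ⌈aa⌉).toNat : ℕ) : ℝ)
      + (if (∃ z : ℤ, aa = (z : ℝ)) then (0 : ℝ) else 1)
      + (if (∃ z : ℤ, bb = (z : ℝ)) then (0 : ℝ) else 1) := by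
  have h1 : ((⌊bb⌋ : ℝ) + 1 - (⌈aa⌉ : ℝ)) ≤ (((⌊bb⌋ + 1 - ⌈aa⌉).toNat : ℕ) : ℝ) := by
    have h0 := Int.self_le_toNat (⌊bb⌋ + 1 - ⌈aa⌉)
    have h0' : ((⌊bb⌋ + 1 - ⌈aa⌉ : ℤ) : ℝ) ≤ (((⌊bb⌋ + 1 - ⌈aa⌉).toNat : ℕ) : ℝ) := by
      exact_mod_cast h0
    push_cast at h0'
    linarith
  have hcl : (⌈aa⌉ : ℝ) < aa + 1 := Int.ceil_lt_add_one aa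
  have hcu : aa ≤ (⌈aa⌉ : ℝ) := Int.le_ceil aa
  have hfl : bb - 1 < (⌊bb⌋ : ℝ) := Int.sub_one_lt_floor bb
  have hfu : (⌊bb⌋ : ℝ) ≤ bb := Int.floor_le bb
  by_cases ha : ∃ z : ℤ, aa = (z : ℝ)
  · obtain ⟨z, rfl⟩ := ha
    have haz : ∃ w : ℤ, (z : ℝ) = (w : ℝ) := ⟨z, rfl⟩
    rw [Int.ceil_intCast] at h1 ⊢
    by_cases hb : ∃ w : ℤ, bb = (w : ℝ)
    · obtain ⟨w, rfl⟩ := hb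
      have hbw : ∃ u : ℤ, (w : ℝ) = (u : ℝ) := ⟨w, rfl⟩
      rw [Int.floor_intCast] at h1 ⊢
      rw [if_pos haz, if_pos hbw]
      linarith
    · rw [if_pos haz, if_neg hb]
      linarith
  · by_cases hb : ∃ w : ℤ, bb = (w : ℝ)
    · obtain ⟨w, rfl⟩ := hb
      have hbw : ∃ u : ℤ, (w : ℝ) = (u : ℝ) := ⟨w, rfl⟩
      rw [Int.floor_intCast] at h1 ⊢
      rw [if_neg ha, if_pos hbw]
      linarith
    · rw [if_neg ha, if_neg hb]
      linarith

lemma partition_card {s : ℕ} (F : Finset ℤ) (p : ℤ → ℝ) (aa bb : Fin s → ℝ)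
    (hdisj : ∀ i j, i ≠ j → Disjoint (Set.Icc (aa i) (bb i)) (Set.Icc (aa j) (bb j)))
    (hcov : ∀ z ∈ F, ∃ i, p z ∈ Set.Icc (aa i) (bb i)) :
    ∑ i, (F.filter (fun z => p z ∈ Set.Icc (aa i) (bb i))).card = F.card := by
  classical
  have h1 : ∀ z ∈ F, ∑ i : Fin s, (if p z ∈ Set.Icc (aa i) (bb i) then 1 else 0) = 1 := by
    intro z hz
    obtain ⟨i0, hi0⟩ := hcov z hz
    rw [← Finset.card_filter]
    rw [Finset.card_eq_one]
    refine ⟨i0, ?_⟩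
    ext j
    simp only [Finset.mem_filter, Finset.mem_univ, true_and, Finset.mem_singleton]
    constructor
    · intro hj
      by_contra hne
      exact Set.disjoint_left.mp (hdisj j i0 hne) hj hi0
    · rintro rfl; exact hi0
  calc ∑ i, (F.filter (fun z => p z ∈ Set.Icc (aa i) (bb i))).card
      = ∑ i : Fin s, ∑ z ∈ F, (if p z ∈ Set.Icc (aa i) (bb i) then 1 else 0) := by
        exact Finset.sum_congr rfl fun i _ => Finset.card_filter _ _
    _ = ∑ z ∈ F, ∑ i : Fin s, (if p z ∈ Set.Icc (aa i) (bb i) then 1 else 0) :=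
        Finset.sum_comm
    _ = ∑ z ∈ F, 1 := Finset.sum_congr rfl h1
    _ = F.card := by simp

theorem stmt3 (lam : ℝ) (hlam : lam ∈ Set.Ioo (0 : ℝ) 1)
    (K L M : Set ℝ) (hK : K.Nonempty) (hL : L.Nonempty)
    (hsub : (1 - lam) • K + lam • L ⊆ M)
    (s : ℕ) (hs : 0 < s) (a b : Fin s → ℝ) (hab : ∀ i, a i ≤ b i)
    (hdisj : ∀ i j, i ≠ j → Disjoint (Set.Icc (a i) (b i)) (Set.Icc (a j) (b j)))
    (hM : M = ⋃ i, Set.Icc (a i) (b i)) :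
    ((latticeEnum1 M : ℝ) +
        ((Finset.univ.filter fun i : Fin s => ¬ ∃ z : ℤ, a i = z).card
          + (Finset.univ.filter fun i : Fin s => ¬ ∃ z : ℤ, b i = z).card : ℕ)) ≥
      (1 - lam) * (latticeEnum1 K : ℝ) + lam * (latticeEnum1 L : ℝ) := by
  obtain ⟨hl0, hl1⟩ := hlam
  have hml : 0 < 1 - lam := by linarith
  have hune : (Finset.univ : Finset (Fin s)).Nonempty := ⟨⟨0, hs⟩, Finset.mem_univ _⟩
  obtain ⟨x0, hx0⟩ := hK
  obtain ⟨y0, hy0⟩ := hL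
  have hmem : ∀ x ∈ K, ∀ y ∈ L, (1 - lam) * x + lam * y ∈ M := by
    intro x hx y hy
    apply hsub
    have := Set.add_mem_add (Set.smul_mem_smul_set (a := 1 - lam) hx)
      (Set.smul_mem_smul_set (a := lam) hy)
    simpa [smul_eq_mul] using this
  set c : ℝ := Finset.univ.inf' hune a with hc
  set d : ℝ := Finset.univ.sup' hune b with hd
  have hMcd : M ⊆ Set.Icc c d := by
    rw [hM]
    rintro x hx
    simp only [Set.mem_iUnion, Set.mem_Icc] at hx
    obtain ⟨i, h1, h2⟩ := hx
    exact ⟨le_trans (Finset.inf'_le a (Finset.mem_univ i)) h1,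
           le_trans h2 (Finset.le_sup' b (Finset.mem_univ i))⟩
  -- finiteness of the integer-point sets
  have hKfin : {z : ℤ | (z : ℝ) ∈ K}.Finite := by
    have hbig : {z : ℤ | (z : ℝ) ∈
        Set.Icc ((c - lam * y0) / (1 - lam)) ((d - lam * y0) / (1 - lam))}.Finite := by
      rw [intpts_Icc]; exact (Finset.Icc _ _).finite_toSet
    apply hbig.subset
    intro z hz
    have hm := hMcd (hmem _ hz _ hy0)
    rw [Set.mem_Icc] at hm
    constructor
    · rw [div_le_iff₀ hml]; linarith [hm.1]
    · rw [le_div_iff₀ hml]; linarith [hm.2]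
  have hLfin : {z : ℤ | (z : ℝ) ∈ L}.Finite := by
    have hbig : {z : ℤ | (z : ℝ) ∈
        Set.Icc ((c - (1 - lam) * x0) / lam) ((d - (1 - lam) * x0) / lam)}.Finite := by
      rw [intpts_Icc]; exact (Finset.Icc _ _).finite_toSet
    apply hbig.subset
    intro z hz
    have hm := hMcd (hmem _ hx0 _ hz)
    rw [Set.mem_Icc] at hm
    constructor
    · rw [div_le_iff₀ hl0]; linarith [hm.1]
    · rw [le_div_iff₀ hl0]; linarith [hm.2]
  have hMfin : {z : ℤ | (z : ℝ) ∈ M}.Finite := by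
    have hbig : {z : ℤ | (z : ℝ) ∈ Set.Icc c d}.Finite := by
      rw [intpts_Icc]; exact (Finset.Icc _ _).finite_toSet
    apply hbig.subset
    intro z hz; exact hMcd hz
  set FK := hKfin.toFinset with hFK
  set FL := hLfin.toFinset with hFL
  set FM := hMfin.toFinset with hFM
  have hKcard : latticeEnum1 K = FK.card := by
    rw [latticeEnum1_eq]; exact Set.ncard_eq_toFinset_card _ hKfin
  have hLcard : latticeEnum1 L = FL.card := by
    rw [latticeEnum1_eq]; exact Set.ncard_eq_toFinset_card _ hLfin
  have hMcard : latticeEnum1 M = FM.card := by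
    rw [latticeEnum1_eq]; exact Set.ncard_eq_toFinset_card _ hMfin
  -- choose kq and lp
  obtain ⟨kq, hkqK, hkq⟩ : ∃ kq, kq ∈ K ∧ ∀ z ∈ FK, (z : ℝ) ≤ kq := by
    rcases FK.eq_empty_or_nonempty with he | hne'
    · exact ⟨x0, hx0, by simp [he]⟩
    · refine ⟨((FK.max' hne' : ℤ) : ℝ), ?_, fun z hz => by exact_mod_cast FK.le_max' z hz⟩
      have hm := FK.max'_mem hne'
      exact hKfin.mem_toFinset.mp hm
  obtain ⟨lp, hlpL, hlp⟩ : ∃ lp, lp ∈ L ∧ ∀ z ∈ FL, lp ≤ (z : ℝ) := by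
    rcases FL.eq_empty_or_nonempty with he | hne'
    · exact ⟨y0, hy0, by simp [he]⟩
    · refine ⟨((FL.min' hne' : ℤ) : ℝ), ?_, fun z hz => by exact_mod_cast FL.min'_le z hz⟩
      have hm := FL.min'_mem hne'
      exact hLfin.mem_toFinset.mp hm
  -- the per-interval finsets
  set A : Fin s → Finset ℤ :=
    fun i => FK.filter (fun z => (1 - lam) * (z : ℝ) + lam * lp ∈ Set.Icc (a i) (b i)) with hA
  set B : Fin s → Finset ℤ :=
    fun i => FL.filter (fun z => (1 - lam) * kq + lam * (z : ℝ) ∈ Set.Icc (a i) (b i)) with hB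
  set C : Fin s → Finset ℤ := fun i => Finset.Icc ⌈a i⌉ ⌊b i⌋ with hC
  have hApart : ∑ i, (A i).card = FK.card := by
    apply partition_card FK (fun z => (1 - lam) * (z : ℝ) + lam * lp) a b hdisj
    intro z hz
    have hz' : (z : ℝ) ∈ K := hKfin.mem_toFinset.mp hz
    have := hmem _ hz' _ hlpL
    rw [hM] at this
    simpa using this
  have hBpart : ∑ i, (B i).card = FL.card := by
    apply partition_card FL (fun z => (1 - lam) * kq + lam * (z : ℝ)) a b hdisj
    intro z hz
    have hz' : (z : ℝ) ∈ L := hLfin.mem_toFinset.mp hz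
    have := hmem _ hkqK _ hz'
    rw [hM] at this
    simpa using this
  -- C i are pairwise disjoint and inside FM
  have hCdisj : ∀ i ∈ (Finset.univ : Finset (Fin s)), ∀ j ∈ (Finset.univ : Finset (Fin s)),
      i ≠ j → Disjoint (C i) (C j) := by
    intro i _ j _ hij
    rw [Finset.disjoint_left]
    intro z hzi hzj
    rw [hC] at hzi hzj
    simp only [Finset.mem_Icc, Int.ceil_le, Int.le_floor] at hzi hzj
    exact Set.disjoint_left.mp (hdisj i j hij) (Set.mem_Icc.mpr hzi) (Set.mem_Icc.mpr hzj)
  have hCsub : Finset.univ.biUnion C ⊆ FM := by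
    intro z hz
    rw [Finset.mem_biUnion] at hz
    obtain ⟨i, _, hzi⟩ := hz
    rw [hC] at hzi
    simp only [Finset.mem_Icc, Int.ceil_le, Int.le_floor] at hzi
    apply hMfin.mem_toFinset.mpr
    show (z : ℝ) ∈ M
    rw [hM]
    exact Set.mem_iUnion.mpr ⟨i, Set.mem_Icc.mpr hzi⟩
  have hsumC : ∑ i, (C i).card ≤ FM.card := by
    rw [← Finset.card_biUnion hCdisj]
    exact Finset.card_le_card hCsub
  -- per-interval bounds
  have key1 : ∀ i, (1 - lam) * ((A i).card : ℝ) + lam * ((B i).card : ℝ)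
      ≤ (b i - a i) + 1 := by
    intro i
    apply core lam (a i) (b i) hl0 hl1 (hab i) (A i) (B i) kq lp
    · intro z hz; exact (Finset.mem_filter.mp hz).2
    · intro z hz; exact (Finset.mem_filter.mp hz).2
    · intro z hz; exact hkq z (Finset.mem_filter.mp hz).1
    · intro z hz; exact hlp z (Finset.mem_filter.mp hz).1
  have key2 : ∀ i, (b i - a i) + 1 ≤ ((C i).card : ℝ)
      + (if (∃ z : ℤ, a i = (z : ℝ)) then (0 : ℝ) else 1)
      + (if (∃ z : ℤ, b i = (z : ℝ)) then (0 : ℝ) else 1) := by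
    intro i
    have := count_bound (a i) (b i) (hab i)
    rw [hC]
    rw [Int.card_Icc]
    exact this
  -- the Z terms
  have hZa : (((Finset.univ.filter fun i : Fin s => ¬ ∃ z : ℤ, a i = (z : ℝ)).card : ℕ) : ℝ)
      = ∑ i, (if (∃ z : ℤ, a i = (z : ℝ)) then (0 : ℝ) else 1) := by
    rw [Finset.card_filter]
    push_cast
    apply Finset.sum_congr rfl
    intro i _
    by_cases h : ∃ z : ℤ, a i = (z : ℝ)
    · simp [h]
    · simp [h]
  have hZb : (((Finset.univ.filter fun i : Fin s => ¬ ∃ z : ℤ, b i = (z : ℝ)).card : ℕ) : ℝ)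
      = ∑ i, (if (∃ z : ℤ, b i = (z : ℝ)) then (0 : ℝ) else 1) := by
    rw [Finset.card_filter]
    push_cast
    apply Finset.sum_congr rfl
    intro i _
    by_cases h : ∃ z : ℤ, b i = (z : ℝ)
    · simp [h]
    · simp [h]
  -- assemble
  rw [ge_iff_le, hKcard, hLcard, hMcard]
  push_cast
  rw [hZa, hZb]
  have hra : (1 - lam) * (FK.card : ℝ) + lam * (FL.card : ℝ)
      = ∑ i, ((1 - lam) * ((A i).card : ℝ) + lam * ((B i).card : ℝ)) := by
    rw [Finset.sum_add_distrib, ← Finset.mul_sum, ← Finset.mul_sum]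
    congr 1
    · congr 1
      exact_mod_cast hApart.symm
    · congr 1
      exact_mod_cast hBpart.symm
  rw [hra]
  calc ∑ i, ((1 - lam) * ((A i).card : ℝ) + lam * ((B i).card : ℝ))
      ≤ ∑ i, ((b i - a i) + 1) := Finset.sum_le_sum fun i _ => key1 i
    _ ≤ ∑ i, (((C i).card : ℝ)
        + (if (∃ z : ℤ, a i = (z : ℝ)) then (0 : ℝ) else 1)
        + (if (∃ z : ℤ, b i = (z : ℝ)) then (0 : ℝ) else 1)) :=
        Finset.sum_le_sum fun i _ => key2 i
    _ = (∑ i, ((C i).card : ℝ))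
        + (∑ i, (if (∃ z : ℤ, a i = (z : ℝ)) then (0 : ℝ) else 1))
        + (∑ i, (if (∃ z : ℤ, b i = (z : ℝ)) then (0 : ℝ) else 1)) := by
        rw [Finset.sum_add_distrib, Finset.sum_add_distrib]
    _ ≤ (FM.card : ℝ)
        + (∑ i, (if (∃ z : ℤ, a i = (z : ℝ)) then (0 : ℝ) else 1))
        + (∑ i, (if (∃ z : ℤ, b i = (z : ℝ)) then (0 : ℝ) else 1)) := by
        have : (∑ i, ((C i).card : ℝ)) ≤ (FM.card : ℝ) := by exact_mod_cast hsumC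
        linarith
    _ = (FM.card : ℝ)
        + ((∑ i, (if (∃ z : ℤ, a i = (z : ℝ)) then (0 : ℝ) else 1))
        + (∑ i, (if (∃ z : ℤ, b i = (z : ℝ)) then (0 : ℝ) else 1))) := by ring
end

section
/- Let λ ∈ (0,1), K, L ⊂ ℝⁿ non-empty bounded sets, and −1/n ≤ p ≤ ∞. Then G_n((1−λ)K + λL + (−1,1)ⁿ) ≥ M_{p/(np+1)}(G_n(K), G_n(L); λ). -/
open Set MeasureTheory
open scoped Pointwise Classical ENNReal NNReal


/-- The λ-weighted `p`-mean of two non-negative reals, with parameter `p ∈ ℝ ∪ {±∞}`,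
vanishing whenever one of the arguments vanishes. -/
noncomputable def pMean (p : EReal) (lam a b : ℝ) : ℝ :=
  if a = 0 ∨ b = 0 then 0
  else if p = ⊤ then max a b
  else if p = ⊥ then min a b
  else if p = 0 then a ^ (1 - lam) * b ^ lam
  else ((1 - lam) * a ^ p.toReal + lam * b ^ p.toReal) ^ (1 / p.toReal)

/-- The exponent `p/(np+1)`, interpreted as `1/n` for `p = ∞` and `-∞` for `p = -1/n`. -/
noncomputable def conjExp (n : ℕ) (p : EReal) : EReal :=
  if p = ⊤ then ((1 / n : ℝ) : EReal)
  else if p = ((-(1 / n : ℝ) : ℝ) : EReal) then ⊥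
  else ((p.toReal / (n * p.toReal + 1) : ℝ) : EReal)

/-- The lattice point enumerator: number of integer points of `M ⊆ ℝⁿ`. -/
noncomputable def latticeEnum (n : ℕ) (M : Set (Fin n → ℝ)) : ℕ :=
  (M ∩ {x : Fin n → ℝ | ∀ i, ∃ z : ℤ, x i = z}).ncard



variable {n : ℕ}

/-- interior open box -/
def obox (b : (Fin n → ℝ) × (Fin n → ℝ)) : Set (Fin n → ℝ) :=
  Set.pi Set.univ fun i => Set.Ioo (b.1 i) (b.2 i)

def bset (b : (Fin n → ℝ) × (Fin n → ℝ)) : Set (Fin n → ℝ) := Set.Icc b.1 b.2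

def Nondeg (b : (Fin n → ℝ) × (Fin n → ℝ)) : Prop := ∀ i, b.1 i < b.2 i

def fset (F : Finset ((Fin n → ℝ) × (Fin n → ℝ))) : Set (Fin n → ℝ) := ⋃ b ∈ F, bset b

def GoodFam (F : Finset ((Fin n → ℝ) × (Fin n → ℝ))) : Prop :=
  (∀ b ∈ F, Nondeg b) ∧
    (F : Set ((Fin n → ℝ) × (Fin n → ℝ))).Pairwise fun b c => Disjoint (obox b) (obox c)

lemma bset_measurable (b : (Fin n → ℝ) × (Fin n → ℝ)) : MeasurableSet (bset b) :=
  measurableSet_Icc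

lemma fset_measurable (F : Finset ((Fin n → ℝ) × (Fin n → ℝ))) : MeasurableSet (fset F) :=
  (F.measurableSet_biUnion fun b _ => bset_measurable b)

lemma vol_bset (b : (Fin n → ℝ) × (Fin n → ℝ)) :
    volume (bset b) = ∏ i, ENNReal.ofReal (b.2 i - b.1 i) := Real.volume_Icc_pi

lemma vol_bset_lt_top (b : (Fin n → ℝ) × (Fin n → ℝ)) : volume (bset b) < ⊤ := by
  rw [vol_bset]
  exact ENNReal.prod_lt_top fun i _ => ENNReal.ofReal_lt_top

lemma vol_bset_deg {b : (Fin n → ℝ) × (Fin n → ℝ)} (h : ¬ Nondeg b) : volume (bset b) = 0 := by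
  rw [vol_bset]
  obtain ⟨i, hi⟩ := not_forall.mp h
  exact Finset.prod_eq_zero (Finset.mem_univ i) (by simp [ENNReal.ofReal_eq_zero]; linarith)

lemma vol_bset_pos {b : (Fin n → ℝ) × (Fin n → ℝ)} (h : Nondeg b) : 0 < volume (bset b) := by
  rw [vol_bset]
  rw [pos_iff_ne_zero]
  rw [Finset.prod_ne_zero_iff]
  intro i _
  simp only [ne_eq, ENNReal.ofReal_eq_zero, not_le]
  linarith [h i]

lemma mem_obox {b : (Fin n → ℝ) × (Fin n → ℝ)} {x : Fin n → ℝ} :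
    x ∈ obox b ↔ ∀ i, b.1 i < x i ∧ x i < b.2 i := by
  simp [obox, Set.mem_univ_pi]

/-- separation of two nondegenerate boxes with disjoint interiors -/
lemma box_separation {b c : (Fin n → ℝ) × (Fin n → ℝ)} (hb : Nondeg b) (hc : Nondeg c)
    (h : Disjoint (obox b) (obox c)) : ∃ i, b.2 i ≤ c.1 i ∨ c.2 i ≤ b.1 i := by
  by_contra hcon
  push_neg at hcon
  set x : Fin n → ℝ := fun i => (max (b.1 i) (c.1 i) + min (b.2 i) (c.2 i)) / 2 with hx
  have hxb : x ∈ obox b := by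
    rw [mem_obox]
    intro i
    obtain ⟨h1, h2⟩ := hcon i
    constructor
    · have : b.1 i < min (b.2 i) (c.2 i) := lt_min (hb i) h2
      have : max (b.1 i) (c.1 i) < min (b.2 i) (c.2 i) := by
        rcases max_cases (b.1 i) (c.1 i) with ⟨he, _⟩ | ⟨he, _⟩ <;> rw [he]
        · exact lt_min (hb i) h2
        · exact lt_min h1 (hc i)
      have hle : b.1 i ≤ max (b.1 i) (c.1 i) := le_max_left _ _
      simp only [hx]
      linarith
    · have : max (b.1 i) (c.1 i) < min (b.2 i) (c.2 i) := by
        rcases max_cases (b.1 i) (c.1 i) with ⟨he, _⟩ | ⟨he, _⟩ <;> rw [he]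
        · exact lt_min (hb i) h2
        · exact lt_min h1 (hc i)
      have hle : min (b.2 i) (c.2 i) ≤ b.2 i := min_le_left _ _
      simp only [hx]
      linarith
  have hxc : x ∈ obox c := by
    rw [mem_obox]
    intro i
    obtain ⟨h1, h2⟩ := hcon i
    have hmm : max (b.1 i) (c.1 i) < min (b.2 i) (c.2 i) := by
      rcases max_cases (b.1 i) (c.1 i) with ⟨he, _⟩ | ⟨he, _⟩ <;> rw [he]
      · exact lt_min (hb i) h2
      · exact lt_min h1 (hc i)
    constructor
    · have hle : c.1 i ≤ max (b.1 i) (c.1 i) := le_max_right _ _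
      simp only [hx]; linarith
    · have hle : min (b.2 i) (c.2 i) ≤ c.2 i := min_le_right _ _
      simp only [hx]; linarith
  exact (h.ne_of_mem hxb hxc) rfl

lemma vol_inter_eq_zero {b c : (Fin n → ℝ) × (Fin n → ℝ)} (hb : Nondeg b) (hc : Nondeg c)
    (h : Disjoint (obox b) (obox c)) : volume (bset b ∩ bset c) = 0 := by
  obtain ⟨i, hi⟩ := box_separation hb hc h
  have : bset b ∩ bset c = Set.Icc (b.1 ⊔ c.1) (b.2 ⊓ c.2) := Set.Icc_inter_Icc
  rw [bset] at this ⊢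
  rw [this, Real.volume_Icc_pi]
  refine Finset.prod_eq_zero (Finset.mem_univ i) ?_
  simp only [ENNReal.ofReal_eq_zero, Pi.inf_apply, Pi.sup_apply]
  rcases hi with hi | hi
  · have h1 : min (b.2 i) (c.2 i) ≤ c.1 i := le_trans (min_le_left _ _) hi
    have h2 : c.1 i ≤ max (b.1 i) (c.1 i) := le_max_right _ _
    linarith
  · have h1 : min (b.2 i) (c.2 i) ≤ b.1 i := le_trans (min_le_right _ _) hi
    have h2 : b.1 i ≤ max (b.1 i) (c.1 i) := le_max_left _ _
    linarith

lemma vol_fset_eq_sum {F : Finset ((Fin n → ℝ) × (Fin n → ℝ))} (hF : GoodFam F) :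
    volume (fset F) = ∑ b ∈ F, volume (bset b) := by
  refine measure_biUnion_finset₀ ?_ fun b _ => (bset_measurable b).nullMeasurableSet
  intro b hb c hc hbc
  exact vol_inter_eq_zero (hF.1 b hb) (hF.1 c hc) (hF.2 hb hc hbc)

/-! ### truncation -/

def tleft (i : Fin n) (t : ℝ) (b : (Fin n → ℝ) × (Fin n → ℝ)) : (Fin n → ℝ) × (Fin n → ℝ) :=
  (b.1, Function.update b.2 i (min (b.2 i) t))

def tright (i : Fin n) (t : ℝ) (b : (Fin n → ℝ) × (Fin n → ℝ)) : (Fin n → ℝ) × (Fin n → ℝ) :=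
  (Function.update b.1 i (max (b.1 i) t), b.2)

lemma bset_tleft (i : Fin n) (t : ℝ) (b : (Fin n → ℝ) × (Fin n → ℝ)) :
    bset (tleft i t b) = bset b ∩ {x | x i ≤ t} := by
  ext x
  simp only [bset, tleft, Set.mem_Icc, Set.mem_inter_iff, Set.mem_setOf_eq, Pi.le_def]
  constructor
  · rintro ⟨h1, h2⟩
    have hxi := h2 i
    rw [Function.update_self] at hxi
    refine ⟨⟨h1, fun j => ?_⟩, le_trans hxi (min_le_right _ _)⟩
    rcases eq_or_ne j i with rfl | hj
    · exact le_trans hxi (min_le_left _ _)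
    · have := h2 j; rwa [Function.update_of_ne hj] at this
  · rintro ⟨⟨h1, h2⟩, h3⟩
    refine ⟨h1, fun j => ?_⟩
    rcases eq_or_ne j i with rfl | hj
    · rw [Function.update_self]; exact le_min (h2 j) h3
    · rw [Function.update_of_ne hj]; exact h2 j

lemma bset_tright (i : Fin n) (t : ℝ) (b : (Fin n → ℝ) × (Fin n → ℝ)) :
    bset (tright i t b) = bset b ∩ {x | t ≤ x i} := by
  ext x
  simp only [bset, tright, Set.mem_Icc, Set.mem_inter_iff, Set.mem_setOf_eq, Pi.le_def]
  constructor
  · rintro ⟨h1, h2⟩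
    have hxi := h1 i
    rw [Function.update_self] at hxi
    refine ⟨⟨fun j => ?_, h2⟩, le_trans (le_max_right _ _) hxi⟩
    rcases eq_or_ne j i with rfl | hj
    · exact le_trans (le_max_left _ _) hxi
    · have := h1 j; rwa [Function.update_of_ne hj] at this
  · rintro ⟨⟨h1, h2⟩, h3⟩
    refine ⟨fun j => ?_, h2⟩
    rcases eq_or_ne j i with rfl | hj
    · rw [Function.update_self]; exact max_le (h1 j) h3
    · rw [Function.update_of_ne hj]; exact h1 j

lemma obox_tleft_subset (i : Fin n) (t : ℝ) (b : (Fin n → ℝ) × (Fin n → ℝ)) :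
    obox (tleft i t b) ⊆ obox b := by
  intro x hx
  rw [mem_obox] at hx ⊢
  intro j
  obtain ⟨h1, h2⟩ := hx j
  refine ⟨h1, ?_⟩
  rcases eq_or_ne j i with rfl | hj
  · simp only [tleft, Function.update_self] at h2
    exact lt_of_lt_of_le h2 (min_le_left _ _)
  · simpa only [tleft, Function.update_of_ne hj] using h2

lemma obox_tright_subset (i : Fin n) (t : ℝ) (b : (Fin n → ℝ) × (Fin n → ℝ)) :
    obox (tright i t b) ⊆ obox b := by
  intro x hx
  rw [mem_obox] at hx ⊢
  intro j
  obtain ⟨h1, h2⟩ := hx j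
  refine ⟨?_, h2⟩
  rcases eq_or_ne j i with rfl | hj
  · simp only [tright, Function.update_self] at h1
    exact lt_of_le_of_lt (le_max_left _ _) h1
  · simpa only [tright, Function.update_of_ne hj] using h1

noncomputable def famLeft (i : Fin n) (t : ℝ) (F : Finset ((Fin n → ℝ) × (Fin n → ℝ))) :
    Finset ((Fin n → ℝ) × (Fin n → ℝ)) := (F.image (tleft i t)).filter Nondeg

noncomputable def famRight (i : Fin n) (t : ℝ) (F : Finset ((Fin n → ℝ) × (Fin n → ℝ))) :
    Finset ((Fin n → ℝ) × (Fin n → ℝ)) := (F.image (tright i t)).filter Nondeg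

lemma good_famLeft (i : Fin n) (t : ℝ) {F : Finset ((Fin n → ℝ) × (Fin n → ℝ))}
    (hF : GoodFam F) : GoodFam (famLeft i t F) := by
  constructor
  · intro b hb; exact (Finset.mem_filter.mp hb).2
  · intro b hb c hc hbc
    obtain ⟨b', hb', rfl⟩ := Finset.mem_image.mp (Finset.mem_filter.mp hb).1
    obtain ⟨c', hc', rfl⟩ := Finset.mem_image.mp (Finset.mem_filter.mp hc).1
    have hne : b' ≠ c' := fun h => hbc (by rw [h])
    exact ((hF.2 hb' hc' hne).mono (obox_tleft_subset i t b') (obox_tleft_subset i t c'))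

lemma good_famRight (i : Fin n) (t : ℝ) {F : Finset ((Fin n → ℝ) × (Fin n → ℝ))}
    (hF : GoodFam F) : GoodFam (famRight i t F) := by
  constructor
  · intro b hb; exact (Finset.mem_filter.mp hb).2
  · intro b hb c hc hbc
    obtain ⟨b', hb', rfl⟩ := Finset.mem_image.mp (Finset.mem_filter.mp hb).1
    obtain ⟨c', hc', rfl⟩ := Finset.mem_image.mp (Finset.mem_filter.mp hc).1
    have hne : b' ≠ c' := fun h => hbc (by rw [h])
    exact ((hF.2 hb' hc' hne).mono (obox_tright_subset i t b') (obox_tright_subset i t c'))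

lemma vol_fset_famLeft (i : Fin n) (t : ℝ) (F : Finset ((Fin n → ℝ) × (Fin n → ℝ))) :
    volume (fset (famLeft i t F)) = volume (fset F ∩ {x | x i ≤ t}) := by
  have himg : fset F ∩ {x | x i ≤ t} = ⋃ b ∈ F, bset (tleft i t b) := by
    simp only [fset, Set.iUnion_inter, bset_tleft]
  rw [himg]
  apply le_antisymm
  · apply measure_mono
    intro x hx
    simp only [fset, Set.mem_iUnion] at hx ⊢
    obtain ⟨b, hb, hxb⟩ := hx
    obtain ⟨b', hb', rfl⟩ := Finset.mem_image.mp (Finset.mem_filter.mp hb).1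
    exact ⟨b', hb', hxb⟩
  · have hsub : (⋃ b ∈ F, bset (tleft i t b)) ⊆
        fset (famLeft i t F) ∪ ⋃ b ∈ F.filter (fun b => ¬ Nondeg (tleft i t b)), bset (tleft i t b) := by
      intro x hx
      simp only [Set.mem_iUnion, Set.mem_union, fset] at hx ⊢
      obtain ⟨b, hb, hxb⟩ := hx
      by_cases hnd : Nondeg (tleft i t b)
      · exact Or.inl ⟨tleft i t b, Finset.mem_filter.mpr ⟨Finset.mem_image_of_mem _ hb, hnd⟩, hxb⟩
      · exact Or.inr ⟨b, Finset.mem_filter.mpr ⟨hb, hnd⟩, hxb⟩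
    calc volume (⋃ b ∈ F, bset (tleft i t b)) ≤ volume (fset (famLeft i t F)) +
          volume (⋃ b ∈ F.filter (fun b => ¬ Nondeg (tleft i t b)), bset (tleft i t b)) :=
        le_trans (measure_mono hsub) (measure_union_le _ _)
      _ = volume (fset (famLeft i t F)) := by
        have hz : volume (⋃ b ∈ F.filter (fun b => ¬ Nondeg (tleft i t b)), bset (tleft i t b)) = 0 := by
          refine le_antisymm (le_trans (measure_biUnion_finset_le _ _) ?_) zero_le
          rw [Finset.sum_eq_zero]
          intro b hb
          exact vol_bset_deg (Finset.mem_filter.mp hb).2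
        rw [hz, add_zero]

lemma vol_fset_famRight (i : Fin n) (t : ℝ) (F : Finset ((Fin n → ℝ) × (Fin n → ℝ))) :
    volume (fset (famRight i t F)) = volume (fset F ∩ {x | t ≤ x i}) := by
  have himg : fset F ∩ {x | t ≤ x i} = ⋃ b ∈ F, bset (tright i t b) := by
    simp only [fset, Set.iUnion_inter, bset_tright]
  rw [himg]
  apply le_antisymm
  · apply measure_mono
    intro x hx
    simp only [fset, Set.mem_iUnion] at hx ⊢
    obtain ⟨b, hb, hxb⟩ := hx
    obtain ⟨b', hb', rfl⟩ := Finset.mem_image.mp (Finset.mem_filter.mp hb).1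
    exact ⟨b', hb', hxb⟩
  · have hsub : (⋃ b ∈ F, bset (tright i t b)) ⊆
        fset (famRight i t F) ∪ ⋃ b ∈ F.filter (fun b => ¬ Nondeg (tright i t b)), bset (tright i t b) := by
      intro x hx
      simp only [Set.mem_iUnion, Set.mem_union, fset] at hx ⊢
      obtain ⟨b, hb, hxb⟩ := hx
      by_cases hnd : Nondeg (tright i t b)
      · exact Or.inl ⟨tright i t b, Finset.mem_filter.mpr ⟨Finset.mem_image_of_mem _ hb, hnd⟩, hxb⟩
      · exact Or.inr ⟨b, Finset.mem_filter.mpr ⟨hb, hnd⟩, hxb⟩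
    calc volume (⋃ b ∈ F, bset (tright i t b)) ≤ volume (fset (famRight i t F)) +
          volume (⋃ b ∈ F.filter (fun b => ¬ Nondeg (tright i t b)), bset (tright i t b)) :=
        le_trans (measure_mono hsub) (measure_union_le _ _)
      _ = volume (fset (famRight i t F)) := by
        have hz : volume (⋃ b ∈ F.filter (fun b => ¬ Nondeg (tright i t b)), bset (tright i t b)) = 0 := by
          refine le_antisymm (le_trans (measure_biUnion_finset_le _ _) ?_) zero_le
          rw [Finset.sum_eq_zero]
          intro b hb
          exact vol_bset_deg (Finset.mem_filter.mp hb).2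
        rw [hz, add_zero]

lemma fset_famLeft_subset (i : Fin n) (t : ℝ) (F : Finset ((Fin n → ℝ) × (Fin n → ℝ))) :
    fset (famLeft i t F) ⊆ fset F ∩ {x | x i ≤ t} := by
  intro x hx
  simp only [fset, Set.mem_iUnion] at hx
  obtain ⟨b, hb, hxb⟩ := hx
  obtain ⟨b', hb', rfl⟩ := Finset.mem_image.mp (Finset.mem_filter.mp hb).1
  rw [bset_tleft] at hxb
  exact ⟨Set.mem_biUnion hb' hxb.1, hxb.2⟩

lemma fset_famRight_subset (i : Fin n) (t : ℝ) (F : Finset ((Fin n → ℝ) × (Fin n → ℝ))) :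
    fset (famRight i t F) ⊆ fset F ∩ {x | t ≤ x i} := by
  intro x hx
  simp only [fset, Set.mem_iUnion] at hx
  obtain ⟨b, hb, hxb⟩ := hx
  obtain ⟨b', hb', rfl⟩ := Finset.mem_image.mp (Finset.mem_filter.mp hb).1
  rw [bset_tright] at hxb
  exact ⟨Set.mem_biUnion hb' hxb.1, hxb.2⟩

lemma card_famLeft_lt {F : Finset ((Fin n → ℝ) × (Fin n → ℝ))} {b₂ : (Fin n → ℝ) × (Fin n → ℝ)}
    (hb₂ : b₂ ∈ F) {i : Fin n} {t : ℝ} (ht : t ≤ b₂.1 i) : (famLeft i t F).card < F.card := by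
  have hsub : famLeft i t F ⊆ (F.erase b₂).image (tleft i t) := by
    intro x hx
    obtain ⟨hx1, hx2⟩ := Finset.mem_filter.mp hx
    obtain ⟨b, hb, rfl⟩ := Finset.mem_image.mp hx1
    have hbne : b ≠ b₂ := by
      rintro rfl
      have h1 := hx2 i
      simp only [tleft, Function.update_self] at h1
      have h2 : min (b.2 i) t ≤ b.1 i := le_trans (min_le_right _ _) ht
      exact absurd h1 (not_lt.mpr h2)
    exact Finset.mem_image_of_mem _ (Finset.mem_erase.mpr ⟨hbne, hb⟩)
  calc (famLeft i t F).card ≤ ((F.erase b₂).image (tleft i t)).card := Finset.card_le_card hsub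
    _ ≤ (F.erase b₂).card := Finset.card_image_le
    _ < F.card := Finset.card_erase_lt_of_mem hb₂

lemma card_famRight_lt {F : Finset ((Fin n → ℝ) × (Fin n → ℝ))} {b₁ : (Fin n → ℝ) × (Fin n → ℝ)}
    (hb₁ : b₁ ∈ F) {i : Fin n} {t : ℝ} (ht : b₁.2 i ≤ t) : (famRight i t F).card < F.card := by
  have hsub : famRight i t F ⊆ (F.erase b₁).image (tright i t) := by
    intro x hx
    obtain ⟨hx1, hx2⟩ := Finset.mem_filter.mp hx
    obtain ⟨b, hb, rfl⟩ := Finset.mem_image.mp hx1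
    have hbne : b ≠ b₁ := by
      rintro rfl
      have h := hx2 i
      simp only [tright, Function.update_self] at h
      have : b.2 i ≤ max (b.1 i) t := le_trans ht (le_max_right _ _)
      linarith
    exact Finset.mem_image_of_mem _ (Finset.mem_erase.mpr ⟨hbne, hb⟩)
  calc (famRight i t F).card ≤ ((F.erase b₁).image (tright i t)).card := Finset.card_le_card hsub
    _ ≤ (F.erase b₁).card := Finset.card_image_le
    _ < F.card := Finset.card_erase_lt_of_mem hb₁

/-! ### hyperplane and splitting -/

lemma vol_hyperplane (i : Fin n) (c : ℝ) : volume {x : Fin n → ℝ | x i = c} = 0 := by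
  have : {x : Fin n → ℝ | x i = c} = Set.pi Set.univ (fun j => if j = i then {c} else Set.univ) := by
    ext x
    simp only [Set.mem_setOf_eq, Set.mem_univ_pi]
    constructor
    · intro h j
      by_cases hj : j = i <;> simp [hj, h]
    · intro h
      have := h i
      simpa using this
  rw [this, MeasureTheory.volume_pi_pi]
  refine Finset.prod_eq_zero (Finset.mem_univ i) ?_
  simp

lemma vol_split {X : Set (Fin n → ℝ)} (hX : MeasurableSet X) (i : Fin n) (t : ℝ) :
    volume (X ∩ {x | x i ≤ t}) + volume (X ∩ {x | t ≤ x i}) = volume X := by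
  have hmeas : MeasurableSet {x : Fin n → ℝ | x i ≤ t} :=
    measurableSet_le (measurable_pi_apply i) measurable_const
  have h1 : volume (X ∩ {x | x i ≤ t}) + volume (X \ {x | x i ≤ t}) = volume X :=
    measure_inter_add_diff X hmeas
  have h2 : volume (X ∩ {x | t ≤ x i}) = volume (X \ {x | x i ≤ t}) := by
    apply le_antisymm
    · have hsub : X ∩ {x | t ≤ x i} ⊆ (X \ {x | x i ≤ t}) ∪ {x : Fin n → ℝ | x i = t} := by
        rintro x ⟨hx1, hx2⟩
        by_cases h : x i ≤ t
        · exact Or.inr (le_antisymm h hx2)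
        · exact Or.inl ⟨hx1, h⟩
      calc volume (X ∩ {x | t ≤ x i}) ≤ volume (X \ {x | x i ≤ t}) + volume {x : Fin n → ℝ | x i = t} :=
          le_trans (measure_mono hsub) (measure_union_le _ _)
        _ = volume (X \ {x | x i ≤ t}) := by rw [vol_hyperplane, add_zero]
    · apply measure_mono
      rintro x ⟨hx1, hx2⟩
      exact ⟨hx1, show t ≤ x i from le_of_not_ge (fun h => hx2 h)⟩
  rw [h2, h1]

/-! ### sums of boxes -/

lemma Icc_add_Icc_pi {l u l' u' : Fin n → ℝ} (h : l ≤ u) (h' : l' ≤ u') :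
    (Set.Icc l u : Set (Fin n → ℝ)) + Set.Icc l' u' = Set.Icc (l + l') (u + u') := by
  apply subset_antisymm
  · rintro x ⟨y, hy, z, hz, rfl⟩
    rw [Set.mem_Icc] at hy hz ⊢
    exact ⟨add_le_add hy.1 hz.1, add_le_add hy.2 hz.2⟩
  · intro x hx
    rw [Set.mem_Icc] at hx
    have hc : ∀ i, ∃ a, a ∈ Set.Icc (l i) (u i) ∧ ∃ b, b ∈ Set.Icc (l' i) (u' i) ∧ a + b = x i := by
      intro i
      have : x i ∈ Set.Icc (l i + l' i) (u i + u' i) := ⟨hx.1 i, hx.2 i⟩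
      rw [← Set.Icc_add_Icc (h i) (h' i)] at this
      obtain ⟨a, ha, b, hb, hab⟩ := this
      exact ⟨a, ha, b, hb, hab⟩
    choose a ha b hb hab using hc
    refine ⟨a, ?_, b, ?_, ?_⟩
    · rw [Set.mem_Icc]; exact ⟨fun i => (ha i).1, fun i => (ha i).2⟩
    · rw [Set.mem_Icc]; exact ⟨fun i => (hb i).1, fun i => (hb i).2⟩
    · funext i; exact hab i

lemma bset_add_bset {b c : (Fin n → ℝ) × (Fin n → ℝ)} (hb : b.1 ≤ b.2) (hc : c.1 ≤ c.2) :
    bset b + bset c = bset (b.1 + c.1, b.2 + c.2) := Icc_add_Icc_pi hb hc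

lemma fset_add_fset (F G : Finset ((Fin n → ℝ) × (Fin n → ℝ))) :
    fset F + fset G = ⋃ b ∈ F, ⋃ c ∈ G, (bset b + bset c) := by
  ext x
  constructor
  · rintro ⟨y, hy, z, hz, rfl⟩
    simp only [fset, Set.mem_iUnion] at hy hz
    obtain ⟨b, hb, hyb⟩ := hy
    obtain ⟨c, hc, hzc⟩ := hz
    exact Set.mem_biUnion hb (Set.mem_biUnion hc (Set.add_mem_add hyb hzc))
  · intro hx
    simp only [Set.mem_iUnion] at hx
    obtain ⟨b, hb, c, hc, hxbc⟩ := hx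
    obtain ⟨y, hyb, z, hzc, rfl⟩ := hxbc
    exact Set.add_mem_add (Set.mem_biUnion hb hyb) (Set.mem_biUnion hc hzc)

lemma measurable_bset_add_bset (b c : (Fin n → ℝ) × (Fin n → ℝ)) :
    MeasurableSet (bset b + bset c) := by
  by_cases hb : b.1 ≤ b.2
  · by_cases hc : c.1 ≤ c.2
    · rw [bset_add_bset hb hc]; exact bset_measurable _
    · have hce : bset c = ∅ := Set.Icc_eq_empty hc
      rw [hce, Set.add_empty]
      exact MeasurableSet.empty
  · have hbe : bset b = ∅ := Set.Icc_eq_empty hb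
    rw [hbe, Set.empty_add]
    exact MeasurableSet.empty

lemma measurable_fset_add_fset (F G : Finset ((Fin n → ℝ) × (Fin n → ℝ))) :
    MeasurableSet (fset F + fset G) := by
  rw [fset_add_fset]
  exact F.measurableSet_biUnion fun b _ =>
    G.measurableSet_biUnion fun c _ => measurable_bset_add_bset b c

lemma compact_fset_add_fset (F G : Finset ((Fin n → ℝ) × (Fin n → ℝ))) :
    IsCompact (fset F + fset G) := by
  rw [fset_add_fset]
  refine F.isCompact_biUnion fun b _ => G.isCompact_biUnion fun c _ => ?_
  by_cases hb : b.1 ≤ b.2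
  · by_cases hc : c.1 ≤ c.2
    · rw [bset_add_bset hb hc]; exact isCompact_Icc
    · have hce : bset c = ∅ := Set.Icc_eq_empty hc
      rw [hce, Set.add_empty]
      exact isCompact_empty
  · have hbe : bset b = ∅ := Set.Icc_eq_empty hb
    rw [hbe, Set.empty_add]
    exact isCompact_empty

/-! ### existence of a balanced cut -/

lemma vol_bset_toReal (b : (Fin n → ℝ) × (Fin n → ℝ)) :
    (volume (bset b)).toReal = ∏ i, max (b.2 i - b.1 i) 0 := by
  rw [vol_bset, ENNReal.toReal_prod]
  exact Finset.prod_congr rfl fun i _ => ENNReal.toReal_ofReal'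

lemma exists_cut {G : Finset ((Fin n → ℝ) × (Fin n → ℝ))} (hG : GoodFam G) (hGne : G.Nonempty)
    (i : Fin n) {c : ℝ} (hc0 : 0 ≤ c) (hc1 : c ≤ (volume (fset G)).toReal) :
    ∃ s : ℝ, (volume (fset G ∩ {x | x i ≤ s})).toReal = c := by
  classical
  -- explicit continuous volume function
  set g : ℝ → ℝ := fun s =>
    ∑ b ∈ G, ∏ j, max (min (b.2 j) (if j = i then s else b.2 j) - b.1 j) 0 with hg
  have hgeq : ∀ s, g s = (volume (fset G ∩ {x | x i ≤ s})).toReal := by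
    intro s
    have hsum : volume (fset G ∩ {x | x i ≤ s}) = ∑ b ∈ G, volume (bset (tleft i s b)) := by
      have : fset G ∩ {x | x i ≤ s} = ⋃ b ∈ G, bset (tleft i s b) := by
        simp only [fset, Set.iUnion_inter, bset_tleft]
      rw [this]
      refine measure_biUnion_finset₀ ?_ fun b _ => (bset_measurable _).nullMeasurableSet
      intro b hb c' hc' hbc
      have : bset (tleft i s b) ∩ bset (tleft i s c') ⊆ bset b ∩ bset c' := by
        rw [bset_tleft, bset_tleft]
        intro x hx
        exact ⟨hx.1.1, hx.2.1⟩
      exact measure_mono_null this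
        (vol_inter_eq_zero (hG.1 b hb) (hG.1 c' hc') (hG.2 hb hc' hbc))
    rw [hsum, ENNReal.toReal_sum (fun b _ => (vol_bset_lt_top _).ne)]
    refine Finset.sum_congr rfl fun b _ => ?_
    rw [vol_bset_toReal]
    refine Finset.prod_congr rfl fun j _ => ?_
    congr 1
    simp only [tleft]
    rcases eq_or_ne j i with rfl | hj
    · rw [Function.update_self, if_pos rfl]
    · rw [Function.update_of_ne hj, if_neg hj, min_self]
  have hcont : Continuous g := by
    refine continuous_finset_sum _ fun b _ => continuous_finset_prod _ fun j _ => ?_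
    refine Continuous.max ?_ continuous_const
    refine Continuous.sub ?_ continuous_const
    refine Continuous.min continuous_const ?_
    by_cases hj : j = i
    · simp only [if_pos hj]; exact continuous_id
    · simp only [if_neg hj]; exact continuous_const
  set s₀ : ℝ := G.inf' hGne (fun b => b.1 i) with hs₀
  set s₁ : ℝ := G.sup' hGne (fun b => b.2 i) with hs₁
  have hs01 : s₀ ≤ s₁ := by
    obtain ⟨b, hb⟩ := hGne
    calc s₀ ≤ b.1 i := by rw [hs₀]; exact Finset.inf'_le _ hb
      _ ≤ b.2 i := le_of_lt (hG.1 b hb i)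
      _ ≤ s₁ := by rw [hs₁]; exact Finset.le_sup' (fun c => c.2 i) hb
  have hg0 : g s₀ = 0 := by
    rw [hg]
    refine Finset.sum_eq_zero fun b hb => ?_
    refine Finset.prod_eq_zero (Finset.mem_univ i) ?_
    rw [if_pos rfl]
    have h1 : min (b.2 i) s₀ ≤ b.1 i := le_trans (min_le_right _ _) (Finset.inf'_le _ hb)
    rw [max_eq_right]
    linarith
  have hg1 : g s₁ = (volume (fset G)).toReal := by
    rw [hgeq s₁]
    congr 1
    rw [Set.inter_eq_self_of_subset_left]
    intro x hx
    simp only [fset, Set.mem_iUnion] at hx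
    obtain ⟨b, hb, hxb⟩ := hx
    have h := (Set.mem_Icc.mp hxb).2 i
    rw [hs₁]
    exact le_trans h (Finset.le_sup' (fun b => b.2 i) hb)
  have hcIcc : c ∈ Set.Icc (g s₀) (g s₁) := by rw [hg0, hg1]; exact ⟨hc0, hc1⟩
  obtain ⟨s, _, hs⟩ := intermediate_value_Icc hs01 hcont.continuousOn hcIcc
  exact ⟨s, by rw [← hgeq s, hs]⟩

/-! ### base case numeric inequality -/

lemma prod_rpow_superadd (hn : 0 < n) (r s : Fin n → ℝ) (hr : ∀ i, 0 < r i)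
    (hs : ∀ i, 0 < s i) :
    ((∏ i, r i) ^ ((1:ℝ)/n) + (∏ i, s i) ^ ((1:ℝ)/n)) ^ (n:ℝ) ≤ ∏ i, (r i + s i) := by
  have hrs : ∀ i, 0 < r i + s i := fun i => add_pos (hr i) (hs i)
  have hP : 0 < ∏ i, (r i + s i) := Finset.prod_pos fun i _ => hrs i
  have hPr : 0 < ∏ i, r i := Finset.prod_pos fun i _ => hr i
  have hPs : 0 < ∏ i, s i := Finset.prod_pos fun i _ => hs i
  have hnR : (0:ℝ) < n := Nat.cast_pos.mpr hn
  have key : (∏ i, r i) ^ ((1:ℝ)/n) + (∏ i, s i) ^ ((1:ℝ)/n) ≤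
      (∏ i, (r i + s i)) ^ ((1:ℝ)/n) := by
    have h1 : (∏ i, (r i / (r i + s i)) ^ ((1:ℝ)/n)) ≤ ∑ i, (1/n : ℝ) * (r i / (r i + s i)) := by
      refine Real.geom_mean_le_arith_mean_weighted Finset.univ _ _
        (fun i _ => by positivity) ?_ (fun i _ => le_of_lt (div_pos (hr i) (hrs i)))
      simp [Finset.sum_const, Finset.card_univ]
      field_simp
    have h2 : (∏ i, (s i / (r i + s i)) ^ ((1:ℝ)/n)) ≤ ∑ i, (1/n : ℝ) * (s i / (r i + s i)) := by
      refine Real.geom_mean_le_arith_mean_weighted Finset.univ _ _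
        (fun i _ => by positivity) ?_ (fun i _ => le_of_lt (div_pos (hs i) (hrs i)))
      simp [Finset.sum_const, Finset.card_univ]
      field_simp
    have hsum : (∑ i, (1/n : ℝ) * (r i / (r i + s i))) + ∑ i, (1/n : ℝ) * (s i / (r i + s i)) = 1 := by
      rw [← Finset.sum_add_distrib]
      have : ∀ i ∈ Finset.univ, (1/n : ℝ) * (r i / (r i + s i)) + (1/n : ℝ) * (s i / (r i + s i))
          = 1/n := by
        intro i _
        rw [← mul_add, ← add_div, div_self (ne_of_gt (hrs i)), mul_one]
      rw [Finset.sum_congr rfl this]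
      simp [Finset.sum_const, Finset.card_univ]
      field_simp
    have hq1 : ∏ i, (r i / (r i + s i)) ^ ((1:ℝ)/n) =
        (∏ i, r i) ^ ((1:ℝ)/n) / (∏ i, (r i + s i)) ^ ((1:ℝ)/n) := by
      calc ∏ i, (r i / (r i + s i)) ^ ((1:ℝ)/n)
          = ∏ i, (r i ^ ((1:ℝ)/n) / (r i + s i) ^ ((1:ℝ)/n)) :=
            Finset.prod_congr rfl fun i _ => Real.div_rpow (hr i).le (hrs i).le _
        _ = (∏ i, r i ^ ((1:ℝ)/n)) / (∏ i, (r i + s i) ^ ((1:ℝ)/n)) := Finset.prod_div_distrib _ _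
        _ = (∏ i, r i) ^ ((1:ℝ)/n) / (∏ i, (r i + s i)) ^ ((1:ℝ)/n) := by
            rw [Real.finset_prod_rpow _ _ (fun i _ => (hr i).le),
              Real.finset_prod_rpow _ _ (fun i _ => (hrs i).le)]
    have hq2 : ∏ i, (s i / (r i + s i)) ^ ((1:ℝ)/n) =
        (∏ i, s i) ^ ((1:ℝ)/n) / (∏ i, (r i + s i)) ^ ((1:ℝ)/n) := by
      calc ∏ i, (s i / (r i + s i)) ^ ((1:ℝ)/n)
          = ∏ i, (s i ^ ((1:ℝ)/n) / (r i + s i) ^ ((1:ℝ)/n)) :=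
            Finset.prod_congr rfl fun i _ => Real.div_rpow (hs i).le (hrs i).le _
        _ = (∏ i, s i ^ ((1:ℝ)/n)) / (∏ i, (r i + s i) ^ ((1:ℝ)/n)) := Finset.prod_div_distrib _ _
        _ = (∏ i, s i) ^ ((1:ℝ)/n) / (∏ i, (r i + s i)) ^ ((1:ℝ)/n) := by
            rw [Real.finset_prod_rpow _ _ (fun i _ => (hs i).le),
              Real.finset_prod_rpow _ _ (fun i _ => (hrs i).le)]
    have hPpow : 0 < (∏ i, (r i + s i)) ^ ((1:ℝ)/n) := Real.rpow_pos_of_pos hP _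
    have := add_le_add h1 h2
    rw [hsum] at this
    rw [hq1, hq2, ← add_div, div_le_one hPpow] at this
    exact this
  calc ((∏ i, r i) ^ ((1:ℝ)/n) + (∏ i, s i) ^ ((1:ℝ)/n)) ^ (n:ℝ)
      ≤ ((∏ i, (r i + s i)) ^ ((1:ℝ)/n)) ^ (n:ℝ) := by
        refine Real.rpow_le_rpow (by positivity) key (by positivity)
    _ = ∏ i, (r i + s i) := by
        rw [← Real.rpow_mul (le_of_lt hP), one_div, inv_mul_cancel₀ (ne_of_gt hnR), Real.rpow_one]

/-! ### main box Brunn-Minkowski -/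

lemma vol_fset_ne_top (F : Finset ((Fin n → ℝ) × (Fin n → ℝ))) : volume (fset F) ≠ ⊤ := by
  refine ne_top_of_le_ne_top ?_ (measure_biUnion_finset_le _ _)
  refine (ENNReal.sum_lt_top.mpr fun b _ => vol_bset_lt_top b).ne

lemma vol_fset_pos {F : Finset ((Fin n → ℝ) × (Fin n → ℝ))} (hF : GoodFam F)
    (hFne : F.Nonempty) : 0 < volume (fset F) := by
  obtain ⟨b, hb⟩ := hFne
  exact lt_of_lt_of_le (vol_bset_pos (hF.1 b hb)) (measure_mono (Set.subset_biUnion_of_mem hb))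

lemma nondeg_le {b : (Fin n → ℝ) × (Fin n → ℝ)} (hb : Nondeg b) : b.1 ≤ b.2 :=
  fun i => (hb i).le

lemma boxBM_base (hn : 0 < n) (b c : (Fin n → ℝ) × (Fin n → ℝ)) (hb : Nondeg b) (hc : Nondeg c) :
    ((volume (bset b)).toReal ^ ((1:ℝ)/n) + (volume (bset c)).toReal ^ ((1:ℝ)/n)) ^ (n:ℝ)
      ≤ (volume (bset b + bset c)).toReal := by
  rw [bset_add_bset (nondeg_le hb) (nondeg_le hc)]
  have h1 : (volume (bset b)).toReal = ∏ i, (b.2 i - b.1 i) :=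
    Real.volume_Icc_pi_toReal (nondeg_le hb)
  have h2 : (volume (bset c)).toReal = ∏ i, (c.2 i - c.1 i) :=
    Real.volume_Icc_pi_toReal (nondeg_le hc)
  have h3 : (volume (bset ((b.1 + c.1, b.2 + c.2) : (Fin n → ℝ) × (Fin n → ℝ)))).toReal
      = ∏ i, ((b.2 i - b.1 i) + (c.2 i - c.1 i)) := by
    have hle : b.1 + c.1 ≤ b.2 + c.2 := fun i => by
      have := (hb i).le; have := (hc i).le
      simp only [Pi.add_apply]; linarith [(hb i).le, (hc i).le]
    rw [show bset ((b.1 + c.1, b.2 + c.2) : (Fin n → ℝ) × (Fin n → ℝ)) =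
      Set.Icc (b.1 + c.1) (b.2 + c.2) from rfl, Real.volume_Icc_pi_toReal hle]
    refine Finset.prod_congr rfl fun i _ => by simp only [Pi.add_apply]; ring
  rw [h1, h2, h3]
  exact prod_rpow_superadd hn _ _ (fun i => sub_pos.mpr (hb i)) (fun i => sub_pos.mpr (hc i))

theorem boxBM (hn : 0 < n) : ∀ k : ℕ, ∀ F G : Finset ((Fin n → ℝ) × (Fin n → ℝ)),
    F.card + G.card ≤ k → GoodFam F → GoodFam G → F.Nonempty → G.Nonempty →
    ((volume (fset F)).toReal ^ ((1:ℝ)/n) + (volume (fset G)).toReal ^ ((1:ℝ)/n)) ^ (n:ℝ)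
      ≤ (volume (fset F + fset G)).toReal := by
  classical
  have main : ∀ k : ℕ, ∀ F G : Finset ((Fin n → ℝ) × (Fin n → ℝ)),
      F.card + G.card ≤ k → GoodFam F → GoodFam G → F.Nonempty → G.Nonempty →
      ((volume (fset F)).toReal ^ ((1:ℝ)/n) + (volume (fset G)).toReal ^ ((1:ℝ)/n)) ^ (n:ℝ)
        ≤ (volume (fset F + fset G)).toReal := by
    intro k
    induction k with
    | zero => intro F G hcard _ _ hFne _
              exfalso
              have := Finset.card_pos.mpr hFne
              omega
    | succ k IH =>
      -- the splitting step, stated for splitting the first family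
      have step : ∀ F G : Finset ((Fin n → ℝ) × (Fin n → ℝ)),
          F.card + G.card ≤ k + 1 → GoodFam F → GoodFam G → F.Nonempty → G.Nonempty →
          ∀ b₁ b₂, b₁ ∈ F → b₂ ∈ F → ∀ i : Fin n, b₁.2 i ≤ b₂.1 i →
          ((volume (fset F)).toReal ^ ((1:ℝ)/n) + (volume (fset G)).toReal ^ ((1:ℝ)/n)) ^ (n:ℝ)
            ≤ (volume (fset F + fset G)).toReal := by
        intro F G hcard hF hG hFne hGne b₁ b₂ hb₁ hb₂ i hsep
        set t := b₁.2 i with ht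
        set A := (volume (fset F)).toReal with hA
        set B := (volume (fset G)).toReal with hB
        have hApos : 0 < A := ENNReal.toReal_pos (vol_fset_pos hF hFne).ne' (vol_fset_ne_top F)
        have hBpos : 0 < B := ENNReal.toReal_pos (vol_fset_pos hG hGne).ne' (vol_fset_ne_top G)
        -- split F at t
        have hFLgood := good_famLeft i t hF
        have hFRgood := good_famRight i t hF
        have hvolFL := vol_fset_famLeft i t F
        have hvolFR := vol_fset_famRight i t F
        have hFLpos : 0 < volume (fset (famLeft i t F)) := by
          rw [hvolFL]
          refine lt_of_lt_of_le (vol_bset_pos (hF.1 b₁ hb₁)) (measure_mono ?_)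
          intro x hx
          exact ⟨Set.mem_biUnion hb₁ hx, (Set.mem_Icc.mp hx).2 i⟩
        have hFRpos : 0 < volume (fset (famRight i t F)) := by
          rw [hvolFR]
          refine lt_of_lt_of_le (vol_bset_pos (hF.1 b₂ hb₂)) (measure_mono ?_)
          intro x hx
          exact ⟨Set.mem_biUnion hb₂ hx, le_trans hsep ((Set.mem_Icc.mp hx).1 i)⟩
        have hsplitF : volume (fset (famLeft i t F)) + volume (fset (famRight i t F))
            = volume (fset F) := by
          rw [hvolFL, hvolFR]; exact vol_split (fset_measurable F) i t
        have hFLne_top : volume (fset (famLeft i t F)) ≠ ⊤ := vol_fset_ne_top _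
        have hFRne_top : volume (fset (famRight i t F)) ≠ ⊤ := vol_fset_ne_top _
        set AL := (volume (fset (famLeft i t F))).toReal with hAL
        set AR := (volume (fset (famRight i t F))).toReal with hAR
        have hALpos : 0 < AL := ENNReal.toReal_pos hFLpos.ne' hFLne_top
        have hARpos : 0 < AR := ENNReal.toReal_pos hFRpos.ne' hFRne_top
        have hALAR : AL + AR = A := by
          rw [hAL, hAR, hA, ← ENNReal.toReal_add hFLne_top hFRne_top, hsplitF]
        set θ := AL / A with hθ
        have hθpos : 0 < θ := div_pos hALpos hApos
        have hθlt1 : θ < 1 := by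
          rw [hθ, div_lt_one hApos]; linarith
        have hALθ : AL = θ * A := by rw [hθ]; field_simp
        have hARθ : AR = (1 - θ) * A := by rw [hθ]; field_simp; linarith
        -- cut G
        obtain ⟨s, hs⟩ := exists_cut hG hGne i (c := θ * B)
          (by positivity) (by rw [← hB]; nlinarith)
        have hGLgood := good_famLeft i s hG
        have hGRgood := good_famRight i s hG
        have hvolGL := vol_fset_famLeft i s G
        have hvolGR := vol_fset_famRight i s G
        have hGLne_top : volume (fset (famLeft i s G)) ≠ ⊤ := vol_fset_ne_top _
        have hGRne_top : volume (fset (famRight i s G)) ≠ ⊤ := vol_fset_ne_top _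
        set BL := (volume (fset (famLeft i s G))).toReal with hBL
        set BR := (volume (fset (famRight i s G))).toReal with hBR
        have hBLθ : BL = θ * B := by rw [hBL, hvolGL]; exact hs
        have hsplitG : volume (fset (famLeft i s G)) + volume (fset (famRight i s G))
            = volume (fset G) := by
          rw [hvolGL, hvolGR]; exact vol_split (fset_measurable G) i s
        have hBLBR : BL + BR = B := by
          rw [hBL, hBR, hB, ← ENNReal.toReal_add hGLne_top hGRne_top, hsplitG]
        have hBRθ : BR = (1 - θ) * B := by linarith
        have hBLpos : 0 < BL := by rw [hBLθ]; positivity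
        have hBRpos : 0 < BR := by rw [hBRθ]; nlinarith
        have hGLne : (famLeft i s G).Nonempty := by
          rw [Finset.nonempty_iff_ne_empty]
          intro h
          have hz : BL = 0 := by rw [hBL, h]; simp [fset]
          linarith
        have hGRne : (famRight i s G).Nonempty := by
          rw [Finset.nonempty_iff_ne_empty]
          intro h
          have hz : BR = 0 := by rw [hBR, h]; simp [fset]
          linarith
        have hFLne : (famLeft i t F).Nonempty := by
          rw [Finset.nonempty_iff_ne_empty]
          intro h
          have hz : AL = 0 := by rw [hAL, h]; simp [fset]
          linarith
        have hFRne : (famRight i t F).Nonempty := by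
          rw [Finset.nonempty_iff_ne_empty]
          intro h
          have hz : AR = 0 := by rw [hAR, h]; simp [fset]
          linarith
        -- cardinalities
        have hcardFL : (famLeft i t F).card < F.card := card_famLeft_lt hb₂ hsep
        have hcardFR : (famRight i t F).card < F.card := card_famRight_lt hb₁ (le_refl t)
        have hcardGL : (famLeft i s G).card ≤ G.card :=
          le_trans (Finset.card_filter_le _ _) Finset.card_image_le
        have hcardGR : (famRight i s G).card ≤ G.card :=
          le_trans (Finset.card_filter_le _ _) Finset.card_image_le
        -- apply induction hypothesis
        have ihL := IH (famLeft i t F) (famLeft i s G) (by omega) hFLgood hGLgood hFLne hGLne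
        have ihR := IH (famRight i t F) (famRight i s G) (by omega) hFRgood hGRgood hFRne hGRne
        -- sums are contained in the two halves
        set UL := fset (famLeft i t F) + fset (famLeft i s G) with hUL
        set UR := fset (famRight i t F) + fset (famRight i s G) with hUR
        have hULsub : UL ⊆ (fset F + fset G) ∩ {x | x i ≤ t + s} := by
          rintro x ⟨y, hy, z, hz, rfl⟩
          have hy' := fset_famLeft_subset i t F hy
          have hz' := fset_famLeft_subset i s G hz
          exact ⟨Set.add_mem_add hy'.1 hz'.1, by
            have h1 : y i ≤ t := hy'.2
            have h2 : z i ≤ s := hz'.2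
            simp only [Set.mem_setOf_eq, Pi.add_apply]
            linarith⟩
        have hURsub : UR ⊆ (fset F + fset G) ∩ {x | t + s ≤ x i} := by
          rintro x ⟨y, hy, z, hz, rfl⟩
          have hy' := fset_famRight_subset i t F hy
          have hz' := fset_famRight_subset i s G hz
          exact ⟨Set.add_mem_add hy'.1 hz'.1, by
            have h1 : t ≤ y i := hy'.2
            have h2 : s ≤ z i := hz'.2
            simp only [Set.mem_setOf_eq, Pi.add_apply]
            linarith⟩
        -- measure bookkeeping
        have hinter : volume (UL ∩ UR) = 0 := by
          refine measure_mono_null ?_ (vol_hyperplane i (t + s))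
          rintro x ⟨hx1, hx2⟩
          have h1 := (hULsub hx1).2
          have h2 := (hURsub hx2).2
          exact le_antisymm h1 h2
        have hsum : volume UL + volume UR ≤ volume (fset F + fset G) := by
          have h1 : volume (UL ∪ UR) + volume (UL ∩ UR) = volume UL + volume UR :=
            measure_union_add_inter UL (measurable_fset_add_fset _ _)
          rw [hinter, add_zero] at h1
          rw [← h1]
          refine measure_mono ?_
          exact Set.union_subset (fun x hx => (hULsub hx).1) (fun x hx => (hURsub hx).1)
        have hXYtop : volume (fset F + fset G) ≠ ⊤ :=
          (compact_fset_add_fset F G).measure_lt_top.ne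
        have hULtop : volume UL ≠ ⊤ :=
          ne_top_of_le_ne_top hXYtop (measure_mono fun x hx => (hULsub hx).1)
        have hURtop : volume UR ≠ ⊤ :=
          ne_top_of_le_ne_top hXYtop (measure_mono fun x hx => (hURsub hx).1)
        have hsumR : (volume UL).toReal + (volume UR).toReal
            ≤ (volume (fset F + fset G)).toReal := by
          rw [← ENNReal.toReal_add hULtop hURtop]
          exact ENNReal.toReal_mono hXYtop hsum
        -- numeric conclusion
        have hn' : (0:ℝ) < n := Nat.cast_pos.mpr hn
        have hrw : ∀ (u v : ℝ), 0 < u → 0 ≤ v →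
            ((u * A) ^ ((1:ℝ)/n) + (u * B) ^ ((1:ℝ)/n)) ^ (n:ℝ)
              = u * (A ^ ((1:ℝ)/n) + B ^ ((1:ℝ)/n)) ^ (n:ℝ) := by
          intro u v hu _
          rw [Real.mul_rpow hu.le hApos.le, Real.mul_rpow hu.le hBpos.le, ← mul_add,
            Real.mul_rpow (Real.rpow_nonneg hu.le _) (by positivity),
            ← Real.rpow_mul hu.le, one_div, inv_mul_cancel₀ (ne_of_gt hn'), Real.rpow_one]
        have hLnum : (AL ^ ((1:ℝ)/n) + BL ^ ((1:ℝ)/n)) ^ (n:ℝ)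
            = θ * (A ^ ((1:ℝ)/n) + B ^ ((1:ℝ)/n)) ^ (n:ℝ) := by
          rw [hALθ, hBLθ]; exact hrw θ 0 hθpos le_rfl
        have hRnum : (AR ^ ((1:ℝ)/n) + BR ^ ((1:ℝ)/n)) ^ (n:ℝ)
            = (1 - θ) * (A ^ ((1:ℝ)/n) + B ^ ((1:ℝ)/n)) ^ (n:ℝ) := by
          rw [hARθ, hBRθ]; exact hrw (1 - θ) 0 (by linarith) le_rfl
        calc (A ^ ((1:ℝ)/n) + B ^ ((1:ℝ)/n)) ^ (n:ℝ)
            = θ * (A ^ ((1:ℝ)/n) + B ^ ((1:ℝ)/n)) ^ (n:ℝ)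
              + (1 - θ) * (A ^ ((1:ℝ)/n) + B ^ ((1:ℝ)/n)) ^ (n:ℝ) := by ring
          _ ≤ (volume UL).toReal + (volume UR).toReal := by
              rw [← hLnum, ← hRnum]
              exact add_le_add ihL ihR
          _ ≤ (volume (fset F + fset G)).toReal := hsumR
      -- now the case analysis
      intro F G hcard hF hG hFne hGne
      by_cases hF2 : 2 ≤ F.card
      · obtain ⟨b₁, hb₁, b₂, hb₂, hne⟩ := Finset.one_lt_card.mp hF2
        obtain ⟨i, hi⟩ := box_separation (hF.1 b₁ hb₁) (hF.1 b₂ hb₂) (hF.2 hb₁ hb₂ hne)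
        rcases hi with hi | hi
        · exact step F G hcard hF hG hFne hGne b₁ b₂ hb₁ hb₂ i hi
        · exact step F G hcard hF hG hFne hGne b₂ b₁ hb₂ hb₁ i hi
      · by_cases hG2 : 2 ≤ G.card
        · obtain ⟨b₁, hb₁, b₂, hb₂, hne⟩ := Finset.one_lt_card.mp hG2
          obtain ⟨i, hi⟩ := box_separation (hG.1 b₁ hb₁) (hG.1 b₂ hb₂) (hG.2 hb₁ hb₂ hne)
          have hcomm : fset G + fset F = fset F + fset G := add_comm _ _
          have hsymm : ∀ (h : G.card + F.card ≤ k + 1) b₁' b₂', b₁' ∈ G → b₂' ∈ G →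
              ∀ i' : Fin n, b₁'.2 i' ≤ b₂'.1 i' →
              ((volume (fset F)).toReal ^ ((1:ℝ)/n) + (volume (fset G)).toReal ^ ((1:ℝ)/n)) ^ (n:ℝ)
                ≤ (volume (fset F + fset G)).toReal := by
            intro h b₁' b₂' hb₁' hb₂' i' hi'
            have := step G F h hG hF hGne hFne b₁' b₂' hb₁' hb₂' i' hi'
            rw [hcomm] at this
            rw [add_comm ((volume (fset F)).toReal ^ ((1:ℝ)/n))
              ((volume (fset G)).toReal ^ ((1:ℝ)/n))]
            exact this
          rcases hi with hi | hi
          · exact hsymm (by omega) b₁ b₂ hb₁ hb₂ i hi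
          · exact hsymm (by omega) b₂ b₁ hb₂ hb₁ i hi
        · -- base case: both singletons
          have hFc : F.card = 1 := by
            have := Finset.card_pos.mpr hFne; omega
          have hGc : G.card = 1 := by
            have := Finset.card_pos.mpr hGne; omega
          obtain ⟨b, rfl⟩ := Finset.card_eq_one.mp hFc
          obtain ⟨c, rfl⟩ := Finset.card_eq_one.mp hGc
          have hfb : fset {b} = bset b := by simp [fset]
          have hfc : fset {c} = bset c := by simp [fset]
          rw [hfb, hfc]
          exact boxBM_base hn b c (hF.1 b (Finset.mem_singleton_self b))
            (hG.1 c (Finset.mem_singleton_self c))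
  exact main


/-! ### lattice points -/

def latt (n : ℕ) : Set (Fin n → ℝ) := {x | ∀ i, ∃ z : ℤ, x i = z}

lemma latt_finite {S : Set (Fin n → ℝ)} (hS : Bornology.IsBounded S) : (S ∩ latt n).Finite := by
  obtain ⟨R, hR⟩ := hS.subset_closedBall 0
  have hsub : S ∩ latt n ⊆ (fun z : Fin n → ℤ => fun i => (z i : ℝ)) ''
      (Set.Icc (fun _ => -⌈R⌉) (fun _ => ⌈R⌉) : Set (Fin n → ℤ)) := by
    rintro x ⟨hxS, hxL⟩
    choose z hz using hxL
    have hxR : ∀ i, |x i| ≤ R := by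
      intro i
      have h1 : ‖x i‖ ≤ ‖x‖ := norm_le_pi_norm x i
      have h2 : ‖x‖ ≤ R := by
        have := hR hxS
        rwa [Metric.mem_closedBall, dist_zero_right] at this
      exact le_trans h1 h2
    refine ⟨z, ⟨fun i => ?_, fun i => ?_⟩, funext fun i => (hz i).symm⟩
    · have : -R ≤ (z i : ℝ) := by rw [← hz i]; linarith [abs_le.mp (hxR i)]
      have h2 : (-⌈R⌉ : ℝ) ≤ (z i : ℝ) := le_trans (by simpa using neg_le_neg (Int.le_ceil R)) this
      exact_mod_cast h2
    · have : (z i : ℝ) ≤ R := by rw [← hz i]; linarith [abs_le.mp (hxR i)]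
      have h2 : (z i : ℝ) ≤ (⌈R⌉ : ℝ) := le_trans this (Int.le_ceil R)
      exact_mod_cast h2
  exact Set.Finite.subset (Set.Finite.image _ (Set.finite_Icc _ _)) hsub

/-- the family of cubes of side `α` over a finite set of lattice points -/
noncomputable def cubeFam (α : ℝ) (Afin : Finset (Fin n → ℝ)) :
    Finset ((Fin n → ℝ) × (Fin n → ℝ)) :=
  Afin.image fun v => (α • v, α • v + fun _ => α)

lemma good_cubeFam {α : ℝ} (hα : 0 < α) {Afin : Finset (Fin n → ℝ)}
    (hA : ∀ v ∈ Afin, ∀ i, ∃ z : ℤ, v i = z) : GoodFam (cubeFam α Afin) := by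
  constructor
  · intro b hb
    obtain ⟨v, hv, rfl⟩ := Finset.mem_image.mp hb
    intro i
    simp only [Pi.smul_apply, Pi.add_apply, smul_eq_mul]
    linarith
  · intro b hb c hc hbc
    obtain ⟨v, hv, rfl⟩ := Finset.mem_image.mp hb
    obtain ⟨w, hw, rfl⟩ := Finset.mem_image.mp hc
    have hvw : v ≠ w := fun h => hbc (by rw [h])
    obtain ⟨i, hi⟩ : ∃ i, v i ≠ w i := by
      by_contra hcon
      push_neg at hcon
      exact hvw (funext hcon)
    obtain ⟨z, hz⟩ := hA v hv i
    obtain ⟨z', hz'⟩ := hA w hw i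
    have hzz' : z ≠ z' := fun h => hi (by rw [hz, hz', h])
    rw [Set.disjoint_left]
    intro x hx hx'
    rw [mem_obox] at hx hx'
    obtain ⟨h1, h2⟩ := hx i
    obtain ⟨h1', h2'⟩ := hx' i
    simp only [Pi.smul_apply, Pi.add_apply, smul_eq_mul, hz, hz'] at h1 h2 h1' h2'
    rcases lt_or_gt_of_ne hzz' with h | h
    · have : (z : ℝ) + 1 ≤ (z' : ℝ) := by exact_mod_cast Int.add_one_le_iff.mpr h
      nlinarith
    · have : (z' : ℝ) + 1 ≤ (z : ℝ) := by exact_mod_cast Int.add_one_le_iff.mpr h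
      nlinarith

lemma cubeFam_injective {α : ℝ} (hα : α ≠ 0) :
    Function.Injective (fun v : Fin n → ℝ => (α • v, α • v + fun _ => α)) := by
  intro v w h
  have h1 : α • v = α • w := congrArg Prod.fst h
  exact smul_right_injective _ hα h1

lemma vol_cubeFam {α : ℝ} (hα : 0 < α) {Afin : Finset (Fin n → ℝ)}
    (hA : ∀ v ∈ Afin, ∀ i, ∃ z : ℤ, v i = z) :
    (volume (fset (cubeFam α Afin))).toReal = Afin.card * α ^ n := by
  rw [vol_fset_eq_sum (good_cubeFam hα hA),
    ENNReal.toReal_sum (fun b _ => (vol_bset_lt_top b).ne), cubeFam,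
    Finset.sum_image (fun x _ y _ h => cubeFam_injective (ne_of_gt hα) h)]
  have hterm : ∀ v ∈ Afin,
      (volume (bset ((α • v, α • v + fun _ => α) : (Fin n → ℝ) × (Fin n → ℝ)))).toReal
        = α ^ n := by
    intro v _
    rw [vol_bset_toReal]
    have hco : ∀ i : Fin n, max (((α • v + fun _ => α) : Fin n → ℝ) i - ((α • v) : Fin n → ℝ) i) 0
        = α := by
      intro i
      simp only [Pi.add_apply, Pi.smul_apply, smul_eq_mul]
      rw [add_sub_cancel_left, max_eq_left hα.le]
    rw [Finset.prod_congr rfl fun i _ => hco i]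
    simp
  rw [Finset.sum_congr rfl hterm, Finset.sum_const, nsmul_eq_mul]

lemma card_cubeFam {α : ℝ} (hα : α ≠ 0) (Afin : Finset (Fin n → ℝ)) :
    (cubeFam α Afin).card = Afin.card :=
  Finset.card_image_of_injective _ (cubeFam_injective hα)

lemma cubeFam_nonempty {α : ℝ} (Afin : Finset (Fin n → ℝ)) (h : Afin.Nonempty) :
    (cubeFam α Afin).Nonempty := by
  obtain ⟨v, hv⟩ := h
  exact ⟨_, Finset.mem_image_of_mem _ hv⟩

/-! ### counting lattice points -/

lemma cube_bounded : Bornology.IsBounded {x : Fin n → ℝ | ∀ i, x i ∈ Set.Ioo (-1:ℝ) 1} := by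
  refine Bornology.IsBounded.subset (Metric.isBounded_closedBall (x := (0 : Fin n → ℝ)) (r := 1)) ?_
  intro x hx
  rw [Metric.mem_closedBall, dist_zero_right]
  refine pi_norm_le_iff_of_nonneg zero_le_one |>.mpr fun i => ?_
  have := hx i
  rw [Real.norm_eq_abs, abs_le]
  constructor <;> linarith [this.1, this.2]

lemma vol_unit_cube_Icc (c : Fin n → ℝ) :
    volume (Set.Icc c (c + fun _ => (1:ℝ))) = 1 := by
  rw [Real.volume_Icc_pi]
  have : ∀ i : Fin n, ENNReal.ofReal (((c + fun _ => (1:ℝ)) : Fin n → ℝ) i - c i) = 1 := by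
    intro i
    simp [Pi.add_apply]
  rw [Finset.prod_congr rfl fun i _ => this i]
  simp

lemma vol_unit_cube_Ico (c : Fin n → ℝ) :
    volume (Set.pi Set.univ fun i => Set.Ico (c i) (c i + 1)) = 1 := by
  rw [MeasureTheory.volume_pi_pi]
  simp [Real.volume_Ico]

lemma count_ge_vol_abstract (W : Set (Fin n → ℝ)) (hWb : Bornology.IsBounded W)
    (D : Finset (Fin n → ℝ)) (hD : ∀ c ∈ D, c ∈ W) :
    (volume (⋃ c ∈ D, Set.Icc c (c + fun _ => (1:ℝ)))).toReal
      ≤ ((W + {x : Fin n → ℝ | ∀ i, x i ∈ Set.Ioo (-1:ℝ) 1}) ∩ latt n).ncard := by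
  classical
  set cube := {x : Fin n → ℝ | ∀ i, x i ∈ Set.Ioo (-1:ℝ) 1} with hcube
  set M := ⋃ c ∈ D, Set.Icc c (c + fun _ => (1:ℝ)) with hM
  set M' := ⋃ c ∈ D, Set.pi Set.univ fun i => Set.Ico (c i) (c i + 1) with hM'
  have hfin : ((W + cube) ∩ latt n).Finite := latt_finite (hWb.add cube_bounded)
  set flr : (Fin n → ℝ) → (Fin n → ℝ) := fun x i => (⌊x i⌋ : ℝ) with hflr
  set T := flr '' M' with hT
  have hTsub : T ⊆ (W + cube) ∩ latt n := by
    rintro z ⟨x, hx, rfl⟩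
    simp only [hM', Set.mem_iUnion] at hx
    obtain ⟨c, hc, hxc⟩ := hx
    rw [Set.mem_univ_pi] at hxc
    constructor
    · refine ⟨c, hD c hc, flr x - c, ?_, by funext i; simp⟩
      intro i
      have h1 : c i ≤ x i := (hxc i).1
      have h2 : x i < c i + 1 := (hxc i).2
      have h3 : (⌊x i⌋ : ℝ) ≤ x i := Int.floor_le _
      have h4 : x i - 1 < ⌊x i⌋ := Int.sub_one_lt_floor _
      simp only [Pi.sub_apply, hflr, Set.mem_Ioo]
      constructor <;> linarith
    · intro i
      exact ⟨⌊x i⌋, rfl⟩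
  have hTfin : T.Finite := hfin.subset hTsub
  have hcover : M' ⊆ ⋃ z ∈ hTfin.toFinset, Set.pi Set.univ fun i => Set.Ico (z i) (z i + 1) := by
    intro x hx
    refine Set.mem_biUnion (hTfin.mem_toFinset.mpr ⟨x, hx, rfl⟩) ?_
    rw [Set.mem_univ_pi]
    intro i
    exact ⟨Int.floor_le _, Int.lt_floor_add_one _⟩
  have hvolM' : volume M' ≤ ((hTfin.toFinset.card : ℕ) : ℝ≥0∞) := by
    calc volume M' ≤ volume (⋃ z ∈ hTfin.toFinset, Set.pi Set.univ fun i => Set.Ico (z i) (z i + 1)) :=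
        measure_mono hcover
      _ ≤ ∑ z ∈ hTfin.toFinset, volume (Set.pi Set.univ fun i => Set.Ico (z i) (z i + 1)) :=
        measure_biUnion_finset_le _ _
      _ = hTfin.toFinset.card := by
        rw [Finset.sum_congr rfl fun z _ => vol_unit_cube_Ico z]
        simp
  have hdiff : volume M ≤ volume M' := by
    have hsub2 : M ⊆ M' ∪ ⋃ c ∈ D, (Set.Icc c (c + fun _ => (1:ℝ)) \
        Set.pi Set.univ fun i => Set.Ico (c i) (c i + 1)) := by
      intro x hx
      simp only [hM, Set.mem_iUnion] at hx
      obtain ⟨c, hc, hxc⟩ := hx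
      by_cases hx' : x ∈ Set.pi Set.univ fun i => Set.Ico (c i) (c i + 1)
      · exact Or.inl (Set.mem_biUnion hc hx')
      · exact Or.inr (Set.mem_biUnion hc ⟨hxc, hx'⟩)
    have hnull : volume (⋃ c ∈ D, (Set.Icc c (c + fun _ => (1:ℝ)) \
        Set.pi Set.univ fun i => Set.Ico (c i) (c i + 1))) = 0 := by
      refine le_antisymm (le_trans (measure_biUnion_finset_le _ _)
        (le_of_eq (Finset.sum_eq_zero fun c _ => ?_))) zero_le
      have hsub3 : (Set.pi Set.univ fun i => Set.Ico (c i) (c i + 1)) ⊆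
          Set.Icc c (c + fun _ => (1:ℝ)) := by
        intro x hx
        rw [Set.mem_univ_pi] at hx
        rw [Set.mem_Icc]
        exact ⟨fun i => (hx i).1, fun i => le_of_lt (hx i).2⟩
      rw [measure_diff hsub3 (MeasurableSet.univ_pi fun i => measurableSet_Ico).nullMeasurableSet
        (by rw [vol_unit_cube_Ico]; exact ENNReal.one_ne_top)]
      rw [vol_unit_cube_Icc, vol_unit_cube_Ico, tsub_self]
    calc volume M ≤ volume M' + volume (⋃ c ∈ D, (Set.Icc c (c + fun _ => (1:ℝ)) \
        Set.pi Set.univ fun i => Set.Ico (c i) (c i + 1))) :=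
        le_trans (measure_mono hsub2) (measure_union_le _ _)
      _ = volume M' := by rw [hnull, add_zero]
  have hfinal : volume M ≤ ((hTfin.toFinset.card : ℕ) : ℝ≥0∞) := le_trans hdiff hvolM'
  have h1 : (volume M).toReal ≤ (hTfin.toFinset.card : ℝ) := by
    have := ENNReal.toReal_mono (by simp) hfinal
    simpa using this
  refine le_trans h1 ?_
  have h2 : hTfin.toFinset.card = T.ncard := (Set.ncard_eq_toFinset_card T hTfin).symm
  have h3 : T.ncard ≤ ((W + cube) ∩ latt n).ncard := Set.ncard_le_ncard hTsub hfin
  have := le_trans (le_of_eq h2) h3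
  exact_mod_cast this

/-! ### power mean comparison -/

lemma arith2_le_rpow_mean {w1 w2 z1 z2 : ℝ} (hw1 : 0 ≤ w1) (hw2 : 0 ≤ w2) (hz1 : 0 ≤ z1)
    (hz2 : 0 ≤ z2) (hw : w1 + w2 = 1) {s : ℝ} (hs : 1 ≤ s) :
    w1 * z1 + w2 * z2 ≤ (w1 * z1 ^ s + w2 * z2 ^ s) ^ (1/s) := by
  have h := Real.arith_mean_le_rpow_mean (Finset.univ : Finset (Fin 2)) ![w1, w2] ![z1, z2]
    (fun i _ => by fin_cases i <;> simpa) (by simp [Fin.sum_univ_two, hw])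
    (fun i _ => by fin_cases i <;> simpa) hs
  simpa [Fin.sum_univ_two] using h

lemma geom_le_target (hn : 0 < n) {lam a b : ℝ} (hlam : lam ∈ Set.Ioo (0:ℝ) 1)
    (ha : 0 < a) (hb : 0 < b) :
    a ^ (1 - lam) * b ^ lam ≤ ((1 - lam) * a ^ ((1:ℝ)/n) + lam * b ^ ((1:ℝ)/n)) ^ (n:ℝ) := by
  have hn' : (0:ℝ) < n := Nat.cast_pos.mpr hn
  set x := a ^ ((1:ℝ)/n) with hx
  set y := b ^ ((1:ℝ)/n) with hy
  have hxpos : 0 < x := Real.rpow_pos_of_pos ha _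
  have hypos : 0 < y := Real.rpow_pos_of_pos hb _
  have hgm : x ^ (1 - lam) * y ^ lam ≤ (1 - lam) * x + lam * y :=
    Real.geom_mean_le_arith_mean2_weighted (by linarith [hlam.2]) hlam.1.le hxpos.le hypos.le
      (by ring)
  have hpow : (x ^ (1 - lam) * y ^ lam) ^ (n:ℝ) ≤ ((1 - lam) * x + lam * y) ^ (n:ℝ) :=
    Real.rpow_le_rpow (by positivity) hgm (by positivity)
  have hid : (x ^ (1 - lam) * y ^ lam) ^ (n:ℝ) = a ^ (1 - lam) * b ^ lam := by
    rw [Real.mul_rpow (by positivity) (by positivity),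
      ← Real.rpow_mul hxpos.le, ← Real.rpow_mul hypos.le, hx, hy,
      ← Real.rpow_mul ha.le, ← Real.rpow_mul hb.le]
    congr 2 <;> field_simp
  rw [← hid]
  exact hpow

lemma min_le_target (hn : 0 < n) {lam a b : ℝ} (hlam : lam ∈ Set.Ioo (0:ℝ) 1)
    (ha : 0 < a) (hb : 0 < b) :
    min a b ≤ ((1 - lam) * a ^ ((1:ℝ)/n) + lam * b ^ ((1:ℝ)/n)) ^ (n:ℝ) := by
  have hn' : (0:ℝ) < n := Nat.cast_pos.mpr hn
  set m := min a b with hm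
  have hmpos : 0 < m := lt_min ha hb
  have h1 : m ^ ((1:ℝ)/n) ≤ a ^ ((1:ℝ)/n) := Real.rpow_le_rpow hmpos.le (min_le_left _ _)
    (by positivity)
  have h2 : m ^ ((1:ℝ)/n) ≤ b ^ ((1:ℝ)/n) := Real.rpow_le_rpow hmpos.le (min_le_right _ _)
    (by positivity)
  have h3 : m ^ ((1:ℝ)/n) ≤ (1 - lam) * a ^ ((1:ℝ)/n) + lam * b ^ ((1:ℝ)/n) := by
    nlinarith [hlam.1, hlam.2]
  have h4 : (m ^ ((1:ℝ)/n)) ^ (n:ℝ) ≤ ((1 - lam) * a ^ ((1:ℝ)/n) + lam * b ^ ((1:ℝ)/n)) ^ (n:ℝ) :=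
    Real.rpow_le_rpow (by positivity) h3 (by positivity)
  have h5 : (m ^ ((1:ℝ)/n)) ^ (n:ℝ) = m := by
    rw [← Real.rpow_mul hmpos.le, one_div, inv_mul_cancel₀ (ne_of_gt hn'), Real.rpow_one]
  linarith

lemma pMean_le_target (hn : 0 < n) {lam : ℝ} (hlam : lam ∈ Set.Ioo (0:ℝ) 1) {p : EReal}
    (hp : ((-(1 / n : ℝ) : ℝ) : EReal) ≤ p) {a b : ℝ} (ha : 0 < a) (hb : 0 < b) :
    pMean (conjExp n p) lam a b ≤ ((1 - lam) * a ^ ((1:ℝ)/n) + lam * b ^ ((1:ℝ)/n)) ^ (n:ℝ) := by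
  have hn' : (0:ℝ) < n := Nat.cast_pos.mpr hn
  have hab : ¬ (a = 0 ∨ b = 0) := by push_neg; exact ⟨ha.ne', hb.ne'⟩
  by_cases hptop : p = ⊤
  · rw [conjExp, if_pos hptop, pMean, if_neg hab, if_neg (EReal.coe_ne_top _),
      if_neg (EReal.coe_ne_bot _), if_neg (by
        rw [EReal.coe_eq_zero]
        positivity)]
    rw [EReal.toReal_coe, one_div_one_div]
  · by_cases hpneg : p = ((-(1 / n : ℝ) : ℝ) : EReal)
    · rw [conjExp, if_neg hptop, if_pos hpneg, pMean, if_neg hab, if_neg bot_ne_top,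
        if_pos rfl]
      exact min_le_target hn hlam ha hb
    · rw [conjExp, if_neg hptop, if_neg hpneg]
      have hpbot : p ≠ ⊥ := by
        intro h
        rw [h] at hp
        exact (EReal.coe_ne_bot _) (le_bot_iff.mp hp)
      set p' := p.toReal with hp'
      have hpcoe : ((p' : ℝ) : EReal) = p := EReal.coe_toReal hptop hpbot
      have hp'ge : -(1/n : ℝ) ≤ p' := by
        rw [← EReal.coe_le_coe_iff, hpcoe]
        exact hp
      have hp'ne : p' ≠ -(1/n : ℝ) := by
        intro h
        exact hpneg (by rw [← hpcoe, h])
      have hp'gt : -(1/n : ℝ) < p' := lt_of_le_of_ne hp'ge (Ne.symm hp'ne)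
      have hd : 0 < (n : ℝ) * p' + 1 := by
        have : (n:ℝ) * (-(1/n)) < n * p' := by
          exact mul_lt_mul_of_pos_left hp'gt hn'
        have h2 : (n:ℝ) * (-(1/n)) = -1 := by field_simp
        linarith
      set d := (n : ℝ) * p' + 1 with hdd
      set qr := p' / d with hqr
      by_cases hp0 : p' = 0
      · have : qr = 0 := by rw [hqr, hp0, zero_div]
        rw [pMean, if_neg hab, if_neg (EReal.coe_ne_top _), if_neg (EReal.coe_ne_bot _),
          if_pos (by rw [this]; rfl)]
        exact geom_le_target hn hlam ha hb
      · have hqrne : qr ≠ 0 := by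
          rw [hqr]
          exact div_ne_zero hp0 (ne_of_gt hd)
        rw [pMean, if_neg hab, if_neg (EReal.coe_ne_top _), if_neg (EReal.coe_ne_bot _),
          if_neg (fun h => hqrne (EReal.coe_eq_zero.mp h)), EReal.toReal_coe]
        rcases lt_or_gt_of_ne hqrne with hqneg | hqpos
        · -- negative exponent: compare with geometric mean
          set x := a ^ qr with hx
          set y := b ^ qr with hy
          have hxpos : 0 < x := Real.rpow_pos_of_pos ha _
          have hypos : 0 < y := Real.rpow_pos_of_pos hb _
          set G := a ^ (1 - lam) * b ^ lam with hG
          have hGpos : 0 < G := by positivity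
          have hgm : x ^ (1 - lam) * y ^ lam ≤ (1 - lam) * x + lam * y :=
            Real.geom_mean_le_arith_mean2_weighted (by linarith [hlam.2]) hlam.1.le
              hxpos.le hypos.le (by ring)
          have hGq : x ^ (1 - lam) * y ^ lam = G ^ qr := by
            rw [hx, hy, hG, Real.mul_rpow (by positivity) (by positivity),
              ← Real.rpow_mul ha.le, ← Real.rpow_mul hb.le,
              ← Real.rpow_mul ha.le, ← Real.rpow_mul hb.le, mul_comm qr (1 - lam),
              mul_comm qr lam]
          have hS : G ^ qr ≤ (1 - lam) * x + lam * y := by rw [← hGq]; exact hgm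
          have hGqpos : 0 < G ^ qr := Real.rpow_pos_of_pos hGpos _
          have hstep : ((1 - lam) * x + lam * y) ^ (1/qr) ≤ (G ^ qr) ^ (1/qr) :=
            Real.rpow_le_rpow_of_nonpos hGqpos hS
              (by rw [one_div]; exact (inv_nonpos.mpr hqneg.le))
          have hGid : (G ^ qr) ^ (1/qr) = G := by
            rw [← Real.rpow_mul hGpos.le, mul_one_div, div_self hqrne, Real.rpow_one]
          calc ((1 - lam) * x + lam * y) ^ (1/qr) ≤ G := by rw [← hGid]; exact hstep
            _ ≤ _ := geom_le_target hn hlam ha hb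
        · -- positive exponent: qr < 1/n, use convexity
          have hqn : qr * n < 1 := by
            rw [hqr, div_mul_eq_mul_div, div_lt_one hd, hdd]
            nlinarith
          have hqnpos : 0 < qr * n := by positivity
          set s := 1 / (qr * n) with hs
          have hs1 : 1 ≤ s := by
            rw [hs]
            rw [le_one_div (by norm_num) hqnpos]
            simpa using hqn.le
          set x := a ^ qr with hx
          set y := b ^ qr with hy
          have hxpos : 0 < x := Real.rpow_pos_of_pos ha _
          have hypos : 0 < y := Real.rpow_pos_of_pos hb _
          have hxs : x ^ s = a ^ ((1:ℝ)/n) := by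
            rw [hx, ← Real.rpow_mul ha.le, hs]
            congr 1
            field_simp
          have hys : y ^ s = b ^ ((1:ℝ)/n) := by
            rw [hy, ← Real.rpow_mul hb.le, hs]
            congr 1
            field_simp
          have hkey : (1 - lam) * x + lam * y ≤ ((1 - lam) * x ^ s + lam * y ^ s) ^ (1/s) :=
            arith2_le_rpow_mean (by linarith [hlam.2]) hlam.1.le hxpos.le hypos.le (by ring) hs1
          set W := (1 - lam) * a ^ ((1:ℝ)/n) + lam * b ^ ((1:ℝ)/n) with hW
          have hWpos : 0 < W := by
            have h1 : 0 < a ^ ((1:ℝ)/n) := Real.rpow_pos_of_pos ha _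
            have h2 : 0 < b ^ ((1:ℝ)/n) := Real.rpow_pos_of_pos hb _
            rw [hW]
            nlinarith [hlam.1, hlam.2]
          have hkey2 : (1 - lam) * x + lam * y ≤ W ^ (qr * n) := by
            have : ((1 - lam) * x ^ s + lam * y ^ s) ^ (1/s) = W ^ (qr * n) := by
              rw [hxs, hys, ← hW, hs, one_div_one_div]
            rw [← this]
            exact hkey
          have hfinal : ((1 - lam) * x + lam * y) ^ (1/qr) ≤ (W ^ (qr * n)) ^ (1/qr) :=
            Real.rpow_le_rpow (by nlinarith [hlam.1, hlam.2, hxpos, hypos])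
              hkey2 (one_div_nonneg.mpr hqpos.le)
          have hWid : (W ^ (qr * n)) ^ (1/qr) = W ^ (n:ℝ) := by
            rw [← Real.rpow_mul hWpos.le]
            congr 1
            field_simp
          rw [hWid] at hfinal
          exact hfinal

/-! ### sum of two cube families -/

lemma pair_cube_sum {α β : ℝ} (hα : 0 < α) (hβ : 0 < β) (v w : Fin n → ℝ) :
    bset ((α • v, α • v + fun _ => α) : (Fin n → ℝ) × (Fin n → ℝ))
      + bset ((β • w, β • w + fun _ => β) : (Fin n → ℝ) × (Fin n → ℝ))
      = Set.Icc (α • v + β • w) ((α • v + β • w) + fun _ => α + β) := by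
  have h1 : ((α • v, α • v + fun _ => α) : (Fin n → ℝ) × (Fin n → ℝ)).1
      ≤ ((α • v, α • v + fun _ => α) : (Fin n → ℝ) × (Fin n → ℝ)).2 := by
    intro i
    simp only [Pi.add_apply, Pi.smul_apply, smul_eq_mul]
    linarith
  have h2 : ((β • w, β • w + fun _ => β) : (Fin n → ℝ) × (Fin n → ℝ)).1
      ≤ ((β • w, β • w + fun _ => β) : (Fin n → ℝ) × (Fin n → ℝ)).2 := by
    intro i
    simp only [Pi.add_apply, Pi.smul_apply, smul_eq_mul]
    linarith
  have hupper : ((α • v + fun _ => α) + (β • w + fun _ => β) : Fin n → ℝ)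
      = (α • v + β • w) + fun _ => α + β := by
    funext i
    simp only [Pi.add_apply, Pi.smul_apply, smul_eq_mul]
    ring
  rw [bset_add_bset h1 h2]
  unfold bset
  rw [hupper]

lemma sum_cubeFam_eq {α β : ℝ} (hα : 0 < α) (hβ : 0 < β) (Afin Bfin : Finset (Fin n → ℝ)) :
    fset (cubeFam α Afin) + fset (cubeFam β Bfin)
      = ⋃ c ∈ (Afin ×ˢ Bfin).image (fun p => α • p.1 + β • p.2),
          Set.Icc c (c + fun _ => α + β) := by
  rw [fset_add_fset]
  ext x
  simp only [Set.mem_iUnion]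
  constructor
  · rintro ⟨bb, hbb, cc, hcc, hx⟩
    obtain ⟨v, hv, rfl⟩ := Finset.mem_image.mp hbb
    obtain ⟨w, hw, rfl⟩ := Finset.mem_image.mp hcc
    refine ⟨α • v + β • w,
      Finset.mem_image.mpr ⟨(v, w), Finset.mem_product.mpr ⟨hv, hw⟩, rfl⟩, ?_⟩
    rw [pair_cube_sum hα hβ] at hx
    exact hx
  · rintro ⟨c, hc, hx⟩
    obtain ⟨⟨v, w⟩, hvw, rfl⟩ := Finset.mem_image.mp hc
    obtain ⟨hv, hw⟩ := Finset.mem_product.mp hvw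
    refine ⟨(α • v, α • v + fun _ => α), Finset.mem_image_of_mem _ hv,
      (β • w, β • w + fun _ => β), Finset.mem_image_of_mem _ hw, ?_⟩
    rw [pair_cube_sum hα hβ]
    exact hx

lemma rpow_vol_val {α : ℝ} (hα : 0 < α) (m : ℕ) (hn : 0 < n) :
    ((m * α ^ n : ℝ)) ^ ((1:ℝ)/n) = α * (m:ℝ) ^ ((1:ℝ)/n) := by
  have hn' : (0:ℝ) < n := Nat.cast_pos.mpr hn
  rw [Real.mul_rpow (Nat.cast_nonneg m) (by positivity), ← Real.rpow_natCast α n,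
    ← Real.rpow_mul hα.le, mul_one_div, div_self (ne_of_gt hn'), Real.rpow_one, mul_comm]

theorem stmt9 (n : ℕ) (hn : 0 < n) (lam : ℝ) (hlam : lam ∈ Set.Ioo (0 : ℝ) 1)
    (K L : Set (Fin n → ℝ)) (hK : K.Nonempty) (hL : L.Nonempty)
    (hKb : Bornology.IsBounded K) (hLb : Bornology.IsBounded L)
    (p : EReal) (hp : ((-(1 / n : ℝ) : ℝ) : EReal) ≤ p) :
    (latticeEnum n ((1 - lam) • K + lam • L +
        {x : Fin n → ℝ | ∀ i, x i ∈ Set.Ioo (-1 : ℝ) 1}) : ℝ) ≥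
      pMean (conjExp n p) lam (latticeEnum n K : ℝ) (latticeEnum n L : ℝ) := by
  by_cases h0 : (latticeEnum n K : ℝ) = 0 ∨ (latticeEnum n L : ℝ) = 0
  · rw [ge_iff_le, pMean, if_pos h0]
    positivity
  · push_neg at h0
    obtain ⟨ha0, hb0⟩ := h0
    have hl1 : 0 < 1 - lam := by linarith [hlam.2]
    have hl0 : 0 < lam := hlam.1
    have hn' : (0:ℝ) < n := Nat.cast_pos.mpr hn
    have hKfin : (K ∩ latt n).Finite := latt_finite hKb
    have hLfin : (L ∩ latt n).Finite := latt_finite hLb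
    set Afin := hKfin.toFinset with hAfin
    set Bfin := hLfin.toFinset with hBfin
    have hcardA : Afin.card = latticeEnum n K :=
      (Set.ncard_eq_toFinset_card _ hKfin).symm
    have hcardB : Bfin.card = latticeEnum n L :=
      (Set.ncard_eq_toFinset_card _ hLfin).symm
    have haR : (0:ℝ) < (latticeEnum n K : ℝ) :=
      lt_of_le_of_ne (Nat.cast_nonneg _) (Ne.symm ha0)
    have hbR : (0:ℝ) < (latticeEnum n L : ℝ) :=
      lt_of_le_of_ne (Nat.cast_nonneg _) (Ne.symm hb0)
    have hAne : Afin.Nonempty := by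
      rw [← Finset.card_pos, hcardA]
      exact_mod_cast haR
    have hBne : Bfin.Nonempty := by
      rw [← Finset.card_pos, hcardB]
      exact_mod_cast hbR
    have hAsub : ∀ v ∈ Afin, v ∈ K := fun v hv => (hKfin.mem_toFinset.mp hv).1
    have hBsub : ∀ w ∈ Bfin, w ∈ L := fun w hw => (hLfin.mem_toFinset.mp hw).1
    have hAlat : ∀ v ∈ Afin, ∀ i, ∃ z : ℤ, v i = z := fun v hv => (hKfin.mem_toFinset.mp hv).2
    have hBlat : ∀ w ∈ Bfin, ∀ i, ∃ z : ℤ, w i = z := fun w hw => (hLfin.mem_toFinset.mp hw).2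
    set F := cubeFam (1 - lam) Afin with hF
    set G := cubeFam lam Bfin with hG
    have hFgood : GoodFam F := good_cubeFam hl1 hAlat
    have hGgood : GoodFam G := good_cubeFam hl0 hBlat
    have hFne : F.Nonempty := cubeFam_nonempty Afin hAne
    have hGne : G.Nonempty := cubeFam_nonempty Bfin hBne
    have hbm := boxBM hn (F.card + G.card) F G le_rfl hFgood hGgood hFne hGne
    have hvF : (volume (fset F)).toReal = Afin.card * (1 - lam) ^ n := vol_cubeFam hl1 hAlat
    have hvG : (volume (fset G)).toReal = Bfin.card * lam ^ n := vol_cubeFam hl0 hBlat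
    -- counting
    set D := (Afin ×ˢ Bfin).image (fun p => (1 - lam) • p.1 + lam • p.2) with hD
    have hDmem : ∀ c ∈ D, c ∈ (1 - lam) • K + lam • L := by
      intro c hc
      obtain ⟨⟨v, w⟩, hvw, rfl⟩ := Finset.mem_image.mp hc
      obtain ⟨hv, hw⟩ := Finset.mem_product.mp hvw
      exact Set.add_mem_add (Set.smul_mem_smul_set (hAsub v hv))
        (Set.smul_mem_smul_set (hBsub w hw))
    have hWb : Bornology.IsBounded ((1 - lam) • K + lam • L) :=
      (hKb.smul₀ _).add (hLb.smul₀ _)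
    have hcount := count_ge_vol_abstract _ hWb D hDmem
    have hsum := sum_cubeFam_eq hl1 hl0 Afin Bfin
    have hone : (fun _ : Fin n => 1 - lam + lam) = (fun _ : Fin n => (1:ℝ)) :=
      funext fun _ => by ring
    rw [hone] at hsum
    rw [← hsum] at hcount
    -- identify latticeEnum with the ncard
    have hlatEq : (latticeEnum n ((1 - lam) • K + lam • L +
        {x : Fin n → ℝ | ∀ i, x i ∈ Set.Ioo (-1 : ℝ) 1}) : ℝ)
        = ((((1 - lam) • K + lam • L +
            {x : Fin n → ℝ | ∀ i, x i ∈ Set.Ioo (-1 : ℝ) 1}) ∩ latt n).ncard : ℝ) := rfl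
    -- mean comparison
    have hmean := pMean_le_target hn hlam hp haR hbR
    -- rpow values
    have hvFr : (volume (fset F)).toReal ^ ((1:ℝ)/n)
        = (1 - lam) * (latticeEnum n K : ℝ) ^ ((1:ℝ)/n) := by
      rw [hvF, ← hcardA]
      exact rpow_vol_val hl1 Afin.card hn
    have hvGr : (volume (fset G)).toReal ^ ((1:ℝ)/n)
        = lam * (latticeEnum n L : ℝ) ^ ((1:ℝ)/n) := by
      rw [hvG, ← hcardB]
      exact rpow_vol_val hl0 Bfin.card hn
    rw [hvFr, hvGr] at hbm
    rw [ge_iff_le]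
    calc pMean (conjExp n p) lam (latticeEnum n K : ℝ) (latticeEnum n L : ℝ)
        ≤ ((1 - lam) * (latticeEnum n K : ℝ) ^ ((1:ℝ)/n)
            + lam * (latticeEnum n L : ℝ) ^ ((1:ℝ)/n)) ^ (n:ℝ) := hmean
      _ ≤ (volume (fset F + fset G)).toReal := hbm
      _ ≤ _ := by
          rw [hlatEq]
          exact hcount
end

section
/- Let λ ∈ (0,1) and K, L ⊂ ℝⁿ be non-empty bounded sets. Then G_n((1−λ)K + λL + (−1,1)ⁿ) ≥ G_n(K)^{1−λ} · G_n(L)^{λ}. -/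
open Set
open scoped Pointwise

open MeasureTheory


/-- Step lemma: integers newly covered when the top point moves from `xo` to `xn`. -/
lemma step_lemma (w xo xn : ℝ) (hw0 : 0 < w) (hw1 : w < 1)
    (hd : w ≤ xn - xo) :
    ∃ T : Finset ℤ,
      (∀ t ∈ T, |(t : ℝ) - xn| < 1 ∧ ⌈xo⌉ < t ∧ t ≤ ⌈xn⌉) ∧
      w + ((⌈xn⌉ : ℝ) - xn) - ((⌈xo⌉ : ℝ) - xo) ≤ (T.card : ℝ) := by
  have hoo : xo ≤ xn := by linarith
  have hco : (⌈xo⌉ : ℝ) < xo + 1 := Int.ceil_lt_add_one xo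
  have hcn : (⌈xn⌉ : ℝ) < xn + 1 := Int.ceil_lt_add_one xn
  have hcn' : xn ≤ (⌈xn⌉ : ℝ) := Int.le_ceil xn
  have hco' : xo ≤ (⌈xo⌉ : ℝ) := Int.le_ceil xo
  by_cases hcase : xn - xo ≤ 1
  · -- T = Ioc ⌈xo⌉ ⌈xn⌉
    refine ⟨Finset.Ioc ⌈xo⌉ ⌈xn⌉, ?_, ?_⟩
    · intro t ht
      simp only [Finset.mem_Ioc] at ht
      obtain ⟨h1, h2⟩ := ht
      refine ⟨?_, h1, h2⟩
      rw [abs_lt]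
      constructor
      · have : (⌈xo⌉ : ℝ) + 1 ≤ (t : ℝ) := by exact_mod_cast h1
        nlinarith
      · have : (t : ℝ) ≤ (⌈xn⌉ : ℝ) := by exact_mod_cast h2
        nlinarith
    · have hle : ⌈xo⌉ ≤ ⌈xn⌉ := Int.ceil_le_ceil hoo
      rw [Int.card_Ioc]
      have h9 : (((⌈xn⌉ - ⌈xo⌉).toNat : ℕ) : ℝ) = (⌈xn⌉ : ℝ) - (⌈xo⌉ : ℝ) := by
        have h8 := Int.toNat_of_nonneg (show (0:ℤ) ≤ ⌈xn⌉ - ⌈xo⌉ by omega)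
        have := congrArg (Int.cast : ℤ → ℝ) h8
        push_cast at this ⊢
        linarith
      rw [h9]
      linarith
  · push_neg at hcase
    by_cases hcf : (⌈xn⌉ : ℝ) - xn ≤ (⌈xo⌉ : ℝ) - xo
    · refine ⟨{⌈xn⌉}, ?_, ?_⟩
      · intro t ht
        simp only [Finset.mem_singleton] at ht
        subst ht
        refine ⟨?_, ?_, le_refl _⟩
        · rw [abs_lt]; constructor <;> nlinarith
        · have : (⌈xo⌉ : ℝ) < (⌈xn⌉ : ℝ) := by nlinarith
          exact_mod_cast this
      · simp; nlinarith
    · push_neg at hcf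
      -- xn is not an integer, use two points
      have hne : xn < (⌈xn⌉ : ℝ) := by nlinarith
      have hD : (1 : ℝ) < (⌈xn⌉ : ℝ) - (⌈xo⌉ : ℝ) := by nlinarith
      have hD2 : ⌈xo⌉ + 2 ≤ ⌈xn⌉ := by
        have : (1 : ℤ) < ⌈xn⌉ - ⌈xo⌉ := by exact_mod_cast hD
        omega
      refine ⟨{⌈xn⌉ - 1, ⌈xn⌉}, ?_, ?_⟩
      · intro t ht
        simp only [Finset.mem_insert, Finset.mem_singleton] at ht
        rcases ht with rfl | rfl
        · refine ⟨?_, by omega, by omega⟩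
          rw [abs_lt]; push_cast; constructor <;> nlinarith
        · refine ⟨?_, by omega, le_refl _⟩
          rw [abs_lt]; constructor <;> nlinarith
      · have : ({⌈xn⌉ - 1, ⌈xn⌉} : Finset ℤ).card = 2 := by
          rw [Finset.card_insert_of_notMem (by simp)]
          simp
        rw [this]
        push_cast
        nlinarith

/-- 1D discrete lemma: `|((1-λ)F + λG + (-1,1)) ∩ ℤ| ≥ (1-λ)|F| + λ|G|` (with ceiling-defect
strengthening for the induction). -/
lemma oneD (lam : ℝ) (h0 : 0 < lam) (h1 : lam < 1) :
    ∀ (N : ℕ) (F G : Finset ℤ) (hF : F.Nonempty) (hG : G.Nonempty),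
      F.card + G.card ≤ N →
      ∃ S : Finset ℤ,
        (∀ s ∈ S, ∃ a ∈ F, ∃ b ∈ G, |(s : ℝ) - ((1 - lam) * a + lam * b)| < 1) ∧
        (∀ s ∈ S, s ≤ ⌈(1 - lam) * (F.max' hF) + lam * (G.max' hG)⌉) ∧
        (1 - lam) * F.card + lam * G.card +
            ((⌈(1 - lam) * (F.max' hF) + lam * (G.max' hG)⌉ : ℝ)
              - ((1 - lam) * (F.max' hF) + lam * (G.max' hG))) ≤ (S.card : ℝ) := by
  intro N
  induction N with
  | zero =>
    intro F G hF hG hc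
    exfalso
    have := Finset.card_pos.mpr hF
    omega
  | succ N ih =>
    intro F G hF hG hcard
    by_cases hG2 : 2 ≤ G.card
    · -- peel the max of G
      set bM := G.max' hG with hbM
      have hbMmem : bM ∈ G := G.max'_mem hG
      set G' := G.erase bM with hG'def
      have hG'card : G'.card = G.card - 1 := Finset.card_erase_of_mem hbMmem
      have hG' : G'.Nonempty := Finset.card_pos.mp (by omega)
      set aM := F.max' hF with haM
      have haMmem : aM ∈ F := F.max'_mem hF
      set bM' := G'.max' hG' with hbM'
      have hbM'mem' : bM' ∈ G' := G'.max'_mem hG'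
      have hbM'G : bM' ∈ G := Finset.mem_of_mem_erase hbM'mem'
      have hbM'lt : bM' ≤ bM - 1 := by
        have h2 : bM' ≠ bM := Finset.ne_of_mem_erase hbM'mem'
        have := G.le_max' bM' hbM'G
        omega
      set xo := (1 - lam) * (aM : ℝ) + lam * (bM' : ℝ) with hxo
      set xn := (1 - lam) * (aM : ℝ) + lam * (bM : ℝ) with hxn
      have hd : lam ≤ xn - xo := by
        have : (bM' : ℝ) ≤ (bM : ℝ) - 1 := by exact_mod_cast hbM'lt
        rw [hxo, hxn]; nlinarith
      obtain ⟨S, hSmem, hSle, hScard⟩ := ih F G' hF hG' (by omega)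
      obtain ⟨T, hTmem, hTcard⟩ := step_lemma lam xo xn h0 h1 hd
      have hdisj : Disjoint S T := by
        rw [Finset.disjoint_left]
        intro s hsS hsT
        have h2 : s ≤ ⌈xo⌉ := hSle s hsS
        have h3 := (hTmem s hsT).2.1
        omega
      refine ⟨S ∪ T, ?_, ?_, ?_⟩
      · intro s hs
        rcases Finset.mem_union.mp hs with hs | hs
        · obtain ⟨a, ha, b, hb, habs⟩ := hSmem s hs
          exact ⟨a, ha, b, Finset.mem_of_mem_erase hb, habs⟩
        · exact ⟨aM, haMmem, bM, hbMmem, (hTmem s hs).1⟩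
      · intro s hs
        have hxonle : xo ≤ xn := by linarith
        rcases Finset.mem_union.mp hs with hs | hs
        · exact le_trans (hSle s hs) (Int.ceil_le_ceil hxonle)
        · exact (hTmem s hs).2.2
      · rw [Finset.card_union_of_disjoint hdisj]
        have hGc : (G'.card : ℝ) = (G.card : ℝ) - 1 := by
          rw [hG'card]
          have : 1 ≤ G.card := by omega
          push_cast [Nat.cast_sub this]
          ring
        push_cast
        rw [hGc] at hScard
        push_cast at hScard hTcard
        linarith
    · by_cases hF2 : 2 ≤ F.card
      · -- peel the max of F
        set aM := F.max' hF with haM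
        have haMmem : aM ∈ F := F.max'_mem hF
        set F' := F.erase aM with hF'def
        have hF'card : F'.card = F.card - 1 := Finset.card_erase_of_mem haMmem
        have hF' : F'.Nonempty := Finset.card_pos.mp (by omega)
        set bM := G.max' hG with hbM
        have hbMmem : bM ∈ G := G.max'_mem hG
        set aM' := F'.max' hF' with haM'
        have haM'mem' : aM' ∈ F' := F'.max'_mem hF'
        have haM'F : aM' ∈ F := Finset.mem_of_mem_erase haM'mem'
        have haM'lt : aM' ≤ aM - 1 := by
          have h2 : aM' ≠ aM := Finset.ne_of_mem_erase haM'mem'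
          have := F.le_max' aM' haM'F
          omega
        set xo := (1 - lam) * (aM' : ℝ) + lam * (bM : ℝ) with hxo
        set xn := (1 - lam) * (aM : ℝ) + lam * (bM : ℝ) with hxn
        have hd : 1 - lam ≤ xn - xo := by
          have : (aM' : ℝ) ≤ (aM : ℝ) - 1 := by exact_mod_cast haM'lt
          rw [hxo, hxn]; nlinarith
        obtain ⟨S, hSmem, hSle, hScard⟩ := ih F' G hF' hG (by omega)
        obtain ⟨T, hTmem, hTcard⟩ := step_lemma (1 - lam) xo xn (by linarith) (by linarith) hd
        have hdisj : Disjoint S T := by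
          rw [Finset.disjoint_left]
          intro s hsS hsT
          have h2 : s ≤ ⌈xo⌉ := hSle s hsS
          have h3 := (hTmem s hsT).2.1
          omega
        refine ⟨S ∪ T, ?_, ?_, ?_⟩
        · intro s hs
          rcases Finset.mem_union.mp hs with hs | hs
          · obtain ⟨a, ha, b, hb, habs⟩ := hSmem s hs
            exact ⟨a, Finset.mem_of_mem_erase ha, b, hb, habs⟩
          · exact ⟨aM, haMmem, bM, hbMmem, (hTmem s hs).1⟩
        · intro s hs
          have hxonle : xo ≤ xn := by linarith
          rcases Finset.mem_union.mp hs with hs | hs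
          · exact le_trans (hSle s hs) (Int.ceil_le_ceil hxonle)
          · exact (hTmem s hs).2.2
        · rw [Finset.card_union_of_disjoint hdisj]
          have hFc : (F'.card : ℝ) = (F.card : ℝ) - 1 := by
            rw [hF'card]
            have : 1 ≤ F.card := by omega
            push_cast [Nat.cast_sub this]
            ring
          push_cast
          rw [hFc] at hScard
          push_cast at hScard hTcard
          linarith
      · -- both singletons
        have hFc : F.card = 1 := by
          have := Finset.card_pos.mpr hF; omega
        have hGc : G.card = 1 := by
          have := Finset.card_pos.mpr hG; omega
        set aM := F.max' hF with haM
        set bM := G.max' hG with hbM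
        set x := (1 - lam) * (aM : ℝ) + lam * (bM : ℝ) with hx
        have hfl : (⌊x⌋ : ℝ) ≤ x := Int.floor_le x
        have hfl' : x - 1 < (⌊x⌋ : ℝ) := by
          have := Int.lt_floor_add_one x; linarith
        have hce : x ≤ (⌈x⌉ : ℝ) := Int.le_ceil x
        have hce' : (⌈x⌉ : ℝ) < x + 1 := Int.ceil_lt_add_one x
        refine ⟨{⌊x⌋, ⌈x⌉}, ?_, ?_, ?_⟩
        · intro s hs
          refine ⟨aM, F.max'_mem hF, bM, G.max'_mem hG, ?_⟩
          rcases Finset.mem_insert.mp hs with rfl | hs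
          · rw [abs_lt]; constructor <;> linarith
          · rw [Finset.mem_singleton] at hs; subst hs
            rw [abs_lt]; constructor <;> linarith
        · intro s hs
          rcases Finset.mem_insert.mp hs with rfl | hs
          · exact Int.floor_le_ceil x
          · rw [Finset.mem_singleton] at hs; subst hs; exact le_refl _
        · rw [hFc, hGc]
          by_cases hfc : ⌊x⌋ = ⌈x⌉
          · have hxint : (⌈x⌉ : ℝ) = x := by
              have : (⌊x⌋ : ℝ) = (⌈x⌉ : ℝ) := by exact_mod_cast hfc
              linarith
            have : ({⌊x⌋, ⌈x⌉} : Finset ℤ) = {⌈x⌉} := by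
              rw [hfc]; simp
            rw [this]
            simp [hxint]
          · rw [Finset.card_insert_of_notMem (by simpa using hfc)]
            simp only [Finset.card_singleton]
            push_cast
            linarith


open Set MeasureTheory

lemma integrable_ind (q : ℝ) :
    MeasureTheory.IntegrableOn (fun s : ℝ => if s < q then (1:ℝ) else 0) (Set.Ioo 0 1) := by
  have h1 : (fun s : ℝ => if s < q then (1:ℝ) else 0)
      = (Set.Iio q).indicator (fun _ => (1:ℝ)) := by
    funext s; simp [Set.indicator_apply]
  rw [h1]
  exact ((MeasureTheory.integrableOn_const_iff (C := (1:ℝ))).mpr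
    (Or.inr (by rw [Real.volume_Ioo]; exact ENNReal.ofReal_lt_top))).indicator measurableSet_Iio

lemma integral_ind (q : ℝ) (hq : 0 ≤ q) :
    ∫ s in Set.Ioo (0:ℝ) 1, (if s < q then (1:ℝ) else 0) = min q 1 := by
  have h1 : (fun s : ℝ => if s < q then (1:ℝ) else 0)
      = (Set.Iio q).indicator (fun _ => (1:ℝ)) := by
    funext s; simp [Set.indicator_apply]
  rw [h1, MeasureTheory.setIntegral_indicator measurableSet_Iio,
    MeasureTheory.setIntegral_const]
  have h2 : Set.Ioo (0:ℝ) 1 ∩ Set.Iio q = Set.Ioo 0 (min q 1) := by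
    ext s
    simp only [Set.mem_inter_iff, Set.mem_Iio, Set.mem_Ioo, lt_min_iff]
    tauto
  rw [h2, measureReal_def, Real.volume_Ioo]
  rw [smul_eq_mul, mul_one, sub_zero, ENNReal.toReal_ofReal (by simp [hq])]

open MeasureTheory in
/-- 1D discrete Prékopa–Leindler type inequality. -/
lemma funPL (lam : ℝ) (h0 : 0 < lam) (h1 : lam < 1)
    (f g h : ℤ → ℝ) (F G H : Finset ℤ)
    (hf0 : ∀ t, 0 ≤ f t) (hg0 : ∀ u, 0 ≤ g u) (hh0 : ∀ s, 0 ≤ h s)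
    (hfs : ∀ t, f t ≠ 0 → t ∈ F) (hgs : ∀ u, g u ≠ 0 → u ∈ G)
    (hhs : ∀ s, h s ≠ 0 → s ∈ H)
    (hFne : ∃ t, 0 < f t) (hGne : ∃ u, 0 < g u)
    (hyp : ∀ t u s : ℤ, 0 < f t → 0 < g u →
        |(s : ℝ) - ((1 - lam) * t + lam * u)| < 1 →
        f t ^ (1 - lam) * g u ^ lam ≤ h s) :
    (∑ t ∈ F, f t) ^ (1 - lam) * (∑ u ∈ G, g u) ^ lam ≤ ∑ s ∈ H, h s := by
  classical
  obtain ⟨t₀, ht₀⟩ := hFne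
  obtain ⟨u₀, hu₀⟩ := hGne
  have ht₀F : t₀ ∈ F := hfs t₀ (ne_of_gt ht₀)
  have hu₀G : u₀ ∈ G := hgs u₀ (ne_of_gt hu₀)
  obtain ⟨tm, htmF, htm⟩ := F.exists_max_image f ⟨t₀, ht₀F⟩
  obtain ⟨um, humG, hum⟩ := G.exists_max_image g ⟨u₀, hu₀G⟩
  set a := f tm with ha
  set b := g um with hb
  have ha0 : 0 < a := lt_of_lt_of_le ht₀ (htm t₀ ht₀F)
  have hb0 : 0 < b := lt_of_lt_of_le hu₀ (hum u₀ hu₀G)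
  have hfa : ∀ t, f t ≤ a := by
    intro t
    by_cases htF : t ∈ F
    · exact htm t htF
    · have : f t = 0 := by
        by_contra hne
        exact htF (hfs t hne)
      rw [this]; exact le_of_lt ha0
  have hgb : ∀ u, g u ≤ b := by
    intro u
    by_cases huG : u ∈ G
    · exact hum u huG
    · have : g u = 0 := by
        by_contra hne
        exact huG (hgs u hne)
      rw [this]; exact le_of_lt hb0
  set c := a ^ (1 - lam) * b ^ lam with hc
  have hc0 : 0 < c := mul_pos (Real.rpow_pos_of_pos ha0 _) (Real.rpow_pos_of_pos hb0 _)
  -- the two step functions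
  set Φ : ℝ → ℝ := fun s => ∑ s' ∈ H, (if s < h s' / c then (1:ℝ) else 0) with hΦ
  set ψ : ℝ → ℝ := fun s =>
      (1 - lam) * ∑ t ∈ F, (if s < f t / a then (1:ℝ) else 0)
      + lam * ∑ u ∈ G, (if s < g u / b then (1:ℝ) else 0) with hψ
  -- pointwise comparison on (0,1)
  have key : ∀ s ∈ Set.Ioo (0:ℝ) 1, ψ s ≤ Φ s := by
    rintro s ⟨hs0, hs1⟩
    set Fs := F.filter (fun t => s < f t / a) with hFs
    set Gs := G.filter (fun u => s < g u / b) with hGs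
    have hFsne : Fs.Nonempty := ⟨tm, Finset.mem_filter.mpr ⟨htmF, by
      rw [div_self (ne_of_gt ha0)]; exact hs1⟩⟩
    have hGsne : Gs.Nonempty := ⟨um, Finset.mem_filter.mpr ⟨humG, by
      rw [div_self (ne_of_gt hb0)]; exact hs1⟩⟩
    obtain ⟨S, hSmem, -, hScard⟩ :=
      oneD lam h0 h1 (Fs.card + Gs.card) Fs Gs hFsne hGsne le_rfl
    have hSsub : ∀ s' ∈ S, s < h s' / c := by
      intro s' hs'
      obtain ⟨t, htFs, u, huGs, habs⟩ := hSmem s' hs'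
      have htf : a * s < f t := by
        have := (Finset.mem_filter.mp htFs).2
        rw [lt_div_iff₀ ha0] at this; linarith [this]
      have hug : b * s < g u := by
        have := (Finset.mem_filter.mp huGs).2
        rw [lt_div_iff₀ hb0] at this; linarith [this]
      have hft0 : 0 < f t := lt_trans (mul_pos ha0 hs0) htf
      have hgu0 : 0 < g u := lt_trans (mul_pos hb0 hs0) hug
      have hstep := hyp t u s' hft0 hgu0 habs
      have hlt : (a * s) ^ (1 - lam) * (b * s) ^ lam
          < f t ^ (1 - lam) * g u ^ lam := by
        apply mul_lt_mul''
        · exact Real.rpow_lt_rpow (le_of_lt (mul_pos ha0 hs0)) htf (by linarith)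
        · exact Real.rpow_lt_rpow (le_of_lt (mul_pos hb0 hs0)) hug h0
        · positivity
        · positivity
      have heq : (a * s) ^ (1 - lam) * (b * s) ^ lam = c * s := by
        rw [Real.mul_rpow (le_of_lt ha0) (le_of_lt hs0),
          Real.mul_rpow (le_of_lt hb0) (le_of_lt hs0), hc]
        have : s ^ (1 - lam) * s ^ lam = s := by
          rw [← Real.rpow_add hs0]
          norm_num
        nlinarith [this]
      rw [lt_div_iff₀ hc0]
      rw [heq] at hlt
      calc s * c = c * s := by ring
        _ < f t ^ (1 - lam) * g u ^ lam := by linarith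
        _ ≤ h s' := hstep
    have hSH : S ⊆ H := by
      intro s' hs'
      apply hhs
      have h2 := hSsub s' hs'
      have hpos : 0 < h s' / c := lt_trans hs0 h2
      have h3 : 0 * c < h s' := (lt_div_iff₀ hc0).mp hpos
      have : 0 < h s' := by linarith
      exact ne_of_gt this
    have hΦS : (S.card : ℝ) ≤ Φ s := by
      rw [hΦ]
      have h2 : ∀ s' ∈ S, (1:ℝ) ≤ (if s < h s' / c then (1:ℝ) else 0) := by
        intro s' hs'
        rw [if_pos (hSsub s' hs')]
      calc (S.card : ℝ) = ∑ _s' ∈ S, (1:ℝ) := by simp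
        _ ≤ ∑ s' ∈ S, (if s < h s' / c then (1:ℝ) else 0) := Finset.sum_le_sum h2
        _ ≤ ∑ s' ∈ H, (if s < h s' / c then (1:ℝ) else 0) := by
            apply Finset.sum_le_sum_of_subset_of_nonneg hSH
            intro i _ _
            positivity
    have hψval : ψ s = (1 - lam) * Fs.card + lam * Gs.card := by
      rw [hψ]
      simp only [Finset.sum_boole]
      rfl
    rw [hψval]
    have hcf : (1 - lam) * (Fs.card : ℝ) + lam * (Gs.card : ℝ) ≤ (S.card : ℝ) := by
      have hceil := Int.le_ceil ((1 - lam) * ((Fs.max' hFsne : ℤ) : ℝ)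
        + lam * ((Gs.max' hGsne : ℤ) : ℝ))
      linarith [hScard]
    linarith
  -- integrability
  have hΦint : IntegrableOn Φ (Set.Ioo (0:ℝ) 1) := by
    apply MeasureTheory.integrable_finset_sum
    intro i _
    exact integrable_ind _
  have hψint : IntegrableOn ψ (Set.Ioo (0:ℝ) 1) := by
    apply MeasureTheory.Integrable.add
    · exact (MeasureTheory.integrable_finset_sum _ (fun i _ => integrable_ind _)).const_mul _
    · exact (MeasureTheory.integrable_finset_sum _ (fun i _ => integrable_ind _)).const_mul _
  -- integral computations
  have hΦcalc : ∫ s in Set.Ioo (0:ℝ) 1, Φ s ≤ (∑ s' ∈ H, h s') / c := by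
    rw [hΦ]
    rw [MeasureTheory.integral_finset_sum _ (fun i _ => integrable_ind _)]
    rw [Finset.sum_div]
    apply Finset.sum_le_sum
    intro s' _
    rw [integral_ind _ (div_nonneg (hh0 s') (le_of_lt hc0))]
    exact min_le_left _ _
  have hψcalc : (1 - lam) * ((∑ t ∈ F, f t) / a) + lam * ((∑ u ∈ G, g u) / b)
      = ∫ s in Set.Ioo (0:ℝ) 1, ψ s := by
    rw [hψ]
    rw [MeasureTheory.integral_add
      ((MeasureTheory.integrable_finset_sum _ (fun i _ => integrable_ind _)).const_mul _)
      ((MeasureTheory.integrable_finset_sum _ (fun i _ => integrable_ind _)).const_mul _)]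
    rw [MeasureTheory.integral_const_mul, MeasureTheory.integral_const_mul]
    rw [MeasureTheory.integral_finset_sum _ (fun i _ => integrable_ind _),
      MeasureTheory.integral_finset_sum _ (fun i _ => integrable_ind _)]
    congr 1
    · congr 1
      rw [Finset.sum_div]
      apply Finset.sum_congr rfl
      intro t _
      rw [integral_ind _ (div_nonneg (hf0 t) (le_of_lt ha0))]
      exact (min_eq_left ((div_le_one ha0).mpr (hfa t))).symm
    · congr 1
      rw [Finset.sum_div]
      apply Finset.sum_congr rfl
      intro u _
      rw [integral_ind _ (div_nonneg (hg0 u) (le_of_lt hb0))]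
      exact (min_eq_left ((div_le_one hb0).mpr (hgb u))).symm
  have hmono : ∫ s in Set.Ioo (0:ℝ) 1, ψ s ≤ ∫ s in Set.Ioo (0:ℝ) 1, Φ s :=
    MeasureTheory.setIntegral_mono_on hψint hΦint measurableSet_Ioo key
  -- put everything together
  set P := ∑ t ∈ F, f t with hP
  set Q := ∑ u ∈ G, g u with hQ
  have hP0 : 0 ≤ P := Finset.sum_nonneg (fun t _ => hf0 t)
  have hQ0 : 0 ≤ Q := Finset.sum_nonneg (fun u _ => hg0 u)
  have hfinal : c * ((1 - lam) * (P / a) + lam * (Q / b)) ≤ ∑ s' ∈ H, h s' := by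
    have h2 : (1 - lam) * (P / a) + lam * (Q / b) ≤ (∑ s' ∈ H, h s') / c := by
      calc (1 - lam) * (P / a) + lam * (Q / b)
          = ∫ s in Set.Ioo (0:ℝ) 1, ψ s := hψcalc
        _ ≤ ∫ s in Set.Ioo (0:ℝ) 1, Φ s := hmono
        _ ≤ (∑ s' ∈ H, h s') / c := hΦcalc
    calc c * ((1 - lam) * (P / a) + lam * (Q / b))
        ≤ c * ((∑ s' ∈ H, h s') / c) := by
          exact mul_le_mul_of_nonneg_left h2 (le_of_lt hc0)
      _ = ∑ s' ∈ H, h s' := by field_simp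
  -- AM-GM step
  have hamgm : P ^ (1 - lam) * Q ^ lam
      ≤ (1 - lam) * (c * P / a) + lam * (c * Q / b) := by
    have hXY : (c * P / a) ^ (1 - lam) * (c * Q / b) ^ lam = P ^ (1 - lam) * Q ^ lam := by
      rw [Real.div_rpow (by positivity) (le_of_lt ha0),
          Real.div_rpow (by positivity) (le_of_lt hb0),
          Real.mul_rpow (le_of_lt hc0) hP0,
          Real.mul_rpow (le_of_lt hc0) hQ0]
      have hcc : c ^ (1 - lam) * c ^ lam = c := by
        rw [← Real.rpow_add hc0]; norm_num
      rw [div_mul_div_comm]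
      have hrw : c ^ (1 - lam) * P ^ (1 - lam) * (c ^ lam * Q ^ lam)
          = c * (P ^ (1 - lam) * Q ^ lam) := by
        rw [show c ^ (1 - lam) * P ^ (1 - lam) * (c ^ lam * Q ^ lam)
            = (c ^ (1 - lam) * c ^ lam) * (P ^ (1 - lam) * Q ^ lam) by ring, hcc]
      rw [hrw, hc]
      exact mul_div_cancel_left₀ _ (by positivity)
    rw [← hXY]
    exact Real.geom_mean_le_arith_mean2_weighted (by linarith) (le_of_lt h0)
      (by positivity) (by positivity) (by ring)
  calc P ^ (1 - lam) * Q ^ lam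
      ≤ (1 - lam) * (c * P / a) + lam * (c * Q / b) := hamgm
    _ = c * ((1 - lam) * (P / a) + lam * (Q / b)) := by ring
    _ ≤ ∑ s' ∈ H, h s' := hfinal

set_option maxHeartbeats 1000000 in
/-- Multidimensional discrete Brunn-Minkowski for finite subsets of `ℤⁿ`. -/
lemma multiD (lam : ℝ) (h0 : 0 < lam) (h1 : lam < 1) :
    ∀ (n : ℕ) (A B : Finset (Fin n → ℤ)), A.Nonempty → B.Nonempty →
      ∃ S : Finset (Fin n → ℤ),
        (∀ z ∈ S, ∃ a ∈ A, ∃ b ∈ B,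
            ∀ i, |(z i : ℝ) - ((1 - lam) * (a i) + lam * (b i))| < 1) ∧
        (A.card : ℝ) ^ (1 - lam) * (B.card : ℝ) ^ lam ≤ (S.card : ℝ) := by
  intro n
  induction n with
  | zero =>
    intro A B hA hB
    refine ⟨A, ?_, ?_⟩
    · intro z hz
      obtain ⟨b, hb⟩ := hB
      exact ⟨z, hz, b, hb, fun i => i.elim0⟩
    · have hA1 : A.card = 1 := by
        have h2 : A.card ≤ 1 := Finset.card_le_one.mpr
          (fun x _ y _ => funext (fun i => i.elim0))
        have h3 := Finset.card_pos.mpr hA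
        omega
      have hB1 : B.card = 1 := by
        have h2 : B.card ≤ 1 := Finset.card_le_one.mpr
          (fun x _ y _ => funext (fun i => i.elim0))
        have h3 := Finset.card_pos.mpr hB
        omega
      rw [hA1, hB1]
      norm_num
  | succ n ih =>
    intro A B hA hB
    classical
    set fibA : ℤ → Finset (Fin n → ℤ) :=
      fun t => (A.filter (fun z => z 0 = t)).image Fin.tail with hfibA
    set fibB : ℤ → Finset (Fin n → ℤ) :=
      fun u => (B.filter (fun z => z 0 = u)).image Fin.tail with hfibB
    have hmemA : ∀ (t : ℤ) (y : Fin n → ℤ), y ∈ fibA t ↔ Fin.cons t y ∈ A := by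
      intro t y
      constructor
      · intro hy
        obtain ⟨z, hz, hzy⟩ := Finset.mem_image.mp hy
        obtain ⟨hzA, hz0⟩ := Finset.mem_filter.mp hz
        have : Fin.cons t y = z := by
          rw [← hzy, ← hz0, Fin.cons_self_tail]
        rw [this]; exact hzA
      · intro hy
        apply Finset.mem_image.mpr
        refine ⟨Fin.cons t y, Finset.mem_filter.mpr ⟨hy, Fin.cons_zero _ _⟩, Fin.tail_cons _ _⟩
    have hmemB : ∀ (u : ℤ) (y : Fin n → ℤ), y ∈ fibB u ↔ Fin.cons u y ∈ B := by
      intro u y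
      constructor
      · intro hy
        obtain ⟨z, hz, hzy⟩ := Finset.mem_image.mp hy
        obtain ⟨hzB, hz0⟩ := Finset.mem_filter.mp hz
        have : Fin.cons u y = z := by
          rw [← hzy, ← hz0, Fin.cons_self_tail]
        rw [this]; exact hzB
      · intro hy
        apply Finset.mem_image.mpr
        refine ⟨Fin.cons u y, Finset.mem_filter.mpr ⟨hy, Fin.cons_zero _ _⟩, Fin.tail_cons _ _⟩
    have hcardA : ∀ t : ℤ, (fibA t).card = (A.filter (fun z => z 0 = t)).card := by
      intro t
      apply Finset.card_image_of_injOn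
      intro z hz z' hz' htl
      have h2 := (Finset.mem_filter.mp hz).2
      have h3 := (Finset.mem_filter.mp hz').2
      calc z = Fin.cons (z 0) (Fin.tail z) := (Fin.cons_self_tail z).symm
        _ = Fin.cons (z' 0) (Fin.tail z') := by rw [h2, h3, htl]
        _ = z' := Fin.cons_self_tail z'
    have hcardB : ∀ u : ℤ, (fibB u).card = (B.filter (fun z => z 0 = u)).card := by
      intro u
      apply Finset.card_image_of_injOn
      intro z hz z' hz' htl
      have h2 := (Finset.mem_filter.mp hz).2
      have h3 := (Finset.mem_filter.mp hz').2
      calc z = Fin.cons (z 0) (Fin.tail z) := (Fin.cons_self_tail z).symm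
        _ = Fin.cons (z' 0) (Fin.tail z') := by rw [h2, h3, htl]
        _ = z' := Fin.cons_self_tail z'
    set F : Finset ℤ := A.image (fun z => z 0) with hF
    set G : Finset ℤ := B.image (fun z => z 0) with hG
    set f : ℤ → ℝ := fun t => ((fibA t).card : ℝ) with hf
    set g : ℤ → ℝ := fun u => ((fibB u).card : ℝ) with hg
    have hfib_of_F : ∀ t ∈ F, (fibA t).Nonempty := by
      intro t ht
      obtain ⟨z, hzA, hz0⟩ := Finset.mem_image.mp ht
      exact ⟨Fin.tail z, (hmemA t (Fin.tail z)).mpr (by rw [← hz0, Fin.cons_self_tail]; exact hzA)⟩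
    have hF_of_fib : ∀ t : ℤ, (fibA t).Nonempty → t ∈ F := by
      intro t ⟨y, hy⟩
      exact Finset.mem_image.mpr ⟨Fin.cons t y, (hmemA t y).mp hy, Fin.cons_zero _ _⟩
    have hfib_of_G : ∀ u ∈ G, (fibB u).Nonempty := by
      intro u hu
      obtain ⟨z, hzB, hz0⟩ := Finset.mem_image.mp hu
      exact ⟨Fin.tail z, (hmemB u (Fin.tail z)).mpr (by rw [← hz0, Fin.cons_self_tail]; exact hzB)⟩
    have hG_of_fib : ∀ u : ℤ, (fibB u).Nonempty → u ∈ G := by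
      intro u ⟨y, hy⟩
      exact Finset.mem_image.mpr ⟨Fin.cons u y, (hmemB u y).mp hy, Fin.cons_zero _ _⟩
    have hsumF : (A.card : ℝ) = ∑ t ∈ F, f t := by
      rw [Finset.card_eq_sum_card_fiberwise
        (f := fun z : Fin (n+1) → ℤ => z 0) (t := F)
        (fun z hz => Finset.mem_image.mpr ⟨z, hz, rfl⟩)]
      push_cast
      apply Finset.sum_congr rfl
      intro t _
      simp only [hf, hcardA t]
    have hsumG : (B.card : ℝ) = ∑ u ∈ G, g u := by
      rw [Finset.card_eq_sum_card_fiberwise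
        (f := fun z : Fin (n+1) → ℤ => z 0) (t := G)
        (fun z hz => Finset.mem_image.mpr ⟨z, hz, rfl⟩)]
      push_cast
      apply Finset.sum_congr rfl
      intro u _
      simp only [hg, hcardB u]
    -- for every integer s, a good fiber set
    have key : ∀ s : ℤ, ∃ S' : Finset (Fin n → ℤ),
        (∀ y ∈ S', ∃ t u : ℤ,
            |(s : ℝ) - ((1 - lam) * t + lam * u)| < 1 ∧
            ∃ a' ∈ fibA t, ∃ b' ∈ fibB u,
              ∀ i, |(y i : ℝ) - ((1 - lam) * (a' i) + lam * (b' i))| < 1) ∧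
        (∀ t u : ℤ, (fibA t).Nonempty → (fibB u).Nonempty →
            |(s : ℝ) - ((1 - lam) * t + lam * u)| < 1 →
            f t ^ (1 - lam) * g u ^ lam ≤ ((S'.card : ℕ) : ℝ)) := by
      intro s
      set P := (F ×ˢ G).filter
        (fun p : ℤ × ℤ => |(s : ℝ) - ((1 - lam) * p.1 + lam * p.2)| < 1) with hPdef
      by_cases hPne : P.Nonempty
      · obtain ⟨p0, hp0P, hp0max⟩ :=
          P.exists_max_image (fun p => f p.1 ^ (1 - lam) * g p.2 ^ lam) hPne
        have hp0F : p0.1 ∈ F := (Finset.mem_product.mp (Finset.mem_filter.mp hp0P).1).1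
        have hp0G : p0.2 ∈ G := (Finset.mem_product.mp (Finset.mem_filter.mp hp0P).1).2
        obtain ⟨S', hS'mem, hS'card⟩ :=
          ih (fibA p0.1) (fibB p0.2) (hfib_of_F _ hp0F) (hfib_of_G _ hp0G)
        refine ⟨S', ?_, ?_⟩
        · intro y hy
          obtain ⟨a', ha', b', hb', hcl⟩ := hS'mem y hy
          exact ⟨p0.1, p0.2, (Finset.mem_filter.mp hp0P).2, a', ha', b', hb', hcl⟩
        · intro t u htne hune hclose
          have htuP : (t, u) ∈ P := Finset.mem_filter.mpr
            ⟨Finset.mem_product.mpr ⟨hF_of_fib t htne, hG_of_fib u hune⟩, hclose⟩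
          calc f t ^ (1 - lam) * g u ^ lam
              ≤ f p0.1 ^ (1 - lam) * g p0.2 ^ lam := hp0max (t, u) htuP
            _ ≤ ((S'.card : ℕ) : ℝ) := hS'card
      · refine ⟨∅, by simp, ?_⟩
        intro t u htne hune hclose
        exfalso
        exact hPne ⟨(t, u), Finset.mem_filter.mpr
          ⟨Finset.mem_product.mpr ⟨hF_of_fib t htne, hG_of_fib u hune⟩, hclose⟩⟩
    set Sfun : ℤ → Finset (Fin n → ℤ) := fun s => (key s).choose with hSfun
    set h : ℤ → ℝ := fun s => ((Sfun s).card : ℝ) with hh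
    set Hcand : Finset ℤ := (F ×ˢ G).biUnion
      (fun p : ℤ × ℤ => Finset.Icc (⌊(1 - lam) * (p.1 : ℝ) + lam * (p.2 : ℝ)⌋ - 1)
        (⌈(1 - lam) * (p.1 : ℝ) + lam * (p.2 : ℝ)⌉ + 1)) with hHcand
    have hHsup : ∀ s : ℤ, h s ≠ 0 → s ∈ Hcand := by
      intro s hs
      have hSne : (Sfun s).Nonempty := by
        rw [← Finset.card_pos]
        by_contra hcon
        push_neg at hcon
        apply hs
        simp only [hh, Nat.le_zero.mp hcon, Nat.cast_zero]
      obtain ⟨y, hy⟩ := hSne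
      obtain ⟨t, u, hclose, a', ha', b', hb', -⟩ := ((key s).choose_spec).1 y hy
      have htF : t ∈ F := hF_of_fib t ⟨a', ha'⟩
      have huG : u ∈ G := hG_of_fib u ⟨b', hb'⟩
      apply Finset.mem_biUnion.mpr
      refine ⟨(t, u), Finset.mem_product.mpr ⟨htF, huG⟩, ?_⟩
      rw [Finset.mem_Icc]
      rw [abs_lt] at hclose
      set x := (1 - lam) * (t : ℝ) + lam * (u : ℝ) with hx
      have hfl : (⌊x⌋ : ℝ) ≤ x := Int.floor_le x
      have hce : x ≤ (⌈x⌉ : ℝ) := Int.le_ceil x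
      constructor
      · have : ((⌊x⌋ - 1 : ℤ) : ℝ) < (s : ℝ) := by push_cast; linarith [hclose.1]
        exact_mod_cast le_of_lt (by exact_mod_cast this)
      · have : (s : ℝ) < ((⌈x⌉ + 1 : ℤ) : ℝ) := by push_cast; linarith [hclose.2]
        exact_mod_cast le_of_lt (by exact_mod_cast this)
    -- apply the 1D functional inequality
    obtain ⟨a₀, ha₀⟩ := hA
    obtain ⟨b₀, hb₀⟩ := hB
    have hfpos : ∀ t : ℤ, 0 < f t ↔ (fibA t).Nonempty := fun t => by
      simp only [hf, Nat.cast_pos, Finset.card_pos]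
    have hgpos : ∀ u : ℤ, 0 < g u ↔ (fibB u).Nonempty := fun u => by
      simp only [hg, Nat.cast_pos, Finset.card_pos]
    have hfnn : ∀ t : ℤ, 0 ≤ f t := fun t => by simp only [hf]; positivity
    have hgnn : ∀ u : ℤ, 0 ≤ g u := fun u => by simp only [hg]; positivity
    have hhnn : ∀ s : ℤ, 0 ≤ h s := fun s => by simp only [hh]; positivity
    have hfne : ∃ t, 0 < f t :=
      ⟨a₀ 0, (hfpos _).mpr (hfib_of_F _ (Finset.mem_image.mpr ⟨a₀, ha₀, rfl⟩))⟩
    have hgne : ∃ u, 0 < g u :=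
      ⟨b₀ 0, (hgpos _).mpr (hfib_of_G _ (Finset.mem_image.mpr ⟨b₀, hb₀, rfl⟩))⟩
    have hfsup : ∀ t : ℤ, f t ≠ 0 → t ∈ F := fun t hft =>
      hF_of_fib t ((hfpos t).mp (lt_of_le_of_ne (hfnn t) (Ne.symm hft)))
    have hgsup : ∀ u : ℤ, g u ≠ 0 → u ∈ G := fun u hgu =>
      hG_of_fib u ((hgpos u).mp (lt_of_le_of_ne (hgnn u) (Ne.symm hgu)))
    have hyp1 : ∀ t u s : ℤ, 0 < f t → 0 < g u →
        |(s : ℝ) - ((1 - lam) * t + lam * u)| < 1 →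
        f t ^ (1 - lam) * g u ^ lam ≤ h s := by
      intro t u s hft hgu hclose
      exact ((key s).choose_spec).2 t u ((hfpos t).mp hft) ((hgpos u).mp hgu) hclose
    have hPL := funPL lam h0 h1 f g h F G Hcand hfnn hgnn hhnn
      hfsup hgsup hHsup hfne hgne hyp1
    -- assemble the final set
    set S : Finset (Fin (n+1) → ℤ) := Hcand.biUnion
      (fun s => (Sfun s).image (fun y => Fin.cons s y)) with hS
    have hScard : (S.card : ℝ) = ∑ s ∈ Hcand, h s := by
      rw [hS, Finset.card_biUnion]
      · push_cast
        apply Finset.sum_congr rfl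
        intro s _
        have hinj : Function.Injective (fun y : Fin n → ℤ => (Fin.cons s y : Fin (n+1) → ℤ)) := by
          intro y y' hyy
          have h5 := congrArg Fin.tail hyy
          simpa only [Fin.tail_cons] using h5
        rw [Finset.card_image_of_injective _ hinj]
      · intro s _ s' _ hss'
        rw [Function.onFun, Finset.disjoint_left]
        intro z hz hz'
        obtain ⟨y, _, hzy⟩ := Finset.mem_image.mp hz
        obtain ⟨y', _, hzy'⟩ := Finset.mem_image.mp hz'
        apply hss'
        have h2 : z 0 = s := by rw [← hzy]; exact Fin.cons_zero _ _
        have h3 : z 0 = s' := by rw [← hzy']; exact Fin.cons_zero _ _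
        rw [← h2, h3]
    refine ⟨S, ?_, ?_⟩
    · intro z hz
      obtain ⟨s, hsH, hzim⟩ := Finset.mem_biUnion.mp hz
      obtain ⟨y, hy, hzy⟩ := Finset.mem_image.mp hzim
      obtain ⟨t, u, hclose, a', ha', b', hb', hcl⟩ := ((key s).choose_spec).1 y hy
      refine ⟨Fin.cons t a', (hmemA t a').mp ha', Fin.cons u b', (hmemB u b').mp hb', ?_⟩
      intro i
      induction i using Fin.cases with
      | zero =>
        rw [← hzy]
        simpa using hclose
      | succ j =>
        rw [← hzy]
        simpa using hcl j
    · rw [hScard, hsumF, hsumG]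
      exact hPL

def iota (n : ℕ) : (Fin n → ℤ) → (Fin n → ℝ) := fun z i => (z i : ℝ)

lemma iota_inj (n : ℕ) : Function.Injective (iota n) := by
  intro z z' hz
  funext i
  have h2 : ((z i : ℝ)) = ((z' i : ℝ)) := congrFun hz i
  exact_mod_cast h2

lemma lattice_inter (n : ℕ) (M : Set (Fin n → ℝ)) :
    M ∩ {x : Fin n → ℝ | ∀ i, ∃ z : ℤ, x i = z}
      = iota n '' {z : Fin n → ℤ | iota n z ∈ M} := by
  ext x
  constructor
  · rintro ⟨hxM, hxl⟩
    choose zf hzf using hxl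
    have hzx : iota n zf = x := by
      funext i
      exact (hzf i).symm
    exact ⟨zf, by rw [Set.mem_setOf_eq, hzx]; exact hxM, hzx⟩
  · rintro ⟨z, hz, rfl⟩
    exact ⟨hz, fun i => ⟨z i, rfl⟩⟩

lemma lattice_finite (n : ℕ) (M : Set (Fin n → ℝ)) (hM : Bornology.IsBounded M) :
    {z : Fin n → ℤ | iota n z ∈ M}.Finite := by
  obtain ⟨R, hR⟩ := hM.subset_closedBall 0
  apply Set.Finite.subset (Set.finite_Icc (fun _ : Fin n => -⌈R⌉) (fun _ => ⌈R⌉))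
  intro z hz
  have hnorm : ‖iota n z‖ ≤ R := by
    have := hR hz
    rwa [Metric.mem_closedBall, dist_zero_right] at this
  rw [Set.mem_Icc]
  have habs : ∀ i, -R ≤ (z i : ℝ) ∧ (z i : ℝ) ≤ R := by
    intro i
    rw [← abs_le]
    calc |(z i : ℝ)| = ‖iota n z i‖ := rfl
      _ ≤ ‖iota n z‖ := norm_le_pi_norm _ i
      _ ≤ R := hnorm
  constructor
  · intro i
    have h2 := (habs i).1
    have h3 : -(⌈R⌉ : ℝ) ≤ (z i : ℝ) := by
      have := Int.le_ceil R
      linarith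
    show -⌈R⌉ ≤ z i
    exact_mod_cast h3
  · intro i
    have h2 := (habs i).2
    have h3 : (z i : ℝ) ≤ (⌈R⌉ : ℝ) := by
      have := Int.le_ceil R
      linarith
    show z i ≤ ⌈R⌉
    exact_mod_cast h3

lemma latticeEnum_eq (n : ℕ) (M : Set (Fin n → ℝ))
    (hfin : {z : Fin n → ℤ | iota n z ∈ M}.Finite) :
    latticeEnum n M = hfin.toFinset.card := by
  rw [latticeEnum, lattice_inter, Set.ncard_image_of_injective _ (iota_inj n)]
  exact Set.ncard_eq_toFinset_card _ hfin

theorem stmt10 (n : ℕ) (hn : 0 < n) (lam : ℝ) (hlam : lam ∈ Set.Ioo (0 : ℝ) 1)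
    (K L : Set (Fin n → ℝ)) (hK : K.Nonempty) (hL : L.Nonempty)
    (hKb : Bornology.IsBounded K) (hLb : Bornology.IsBounded L) :
    (latticeEnum n ((1 - lam) • K + lam • L +
        {x : Fin n → ℝ | ∀ i, x i ∈ Set.Ioo (-1 : ℝ) 1}) : ℝ) ≥
      (latticeEnum n K : ℝ) ^ (1 - lam) * (latticeEnum n L : ℝ) ^ lam := by
  obtain ⟨h0, h1⟩ := hlam
  set cube := {x : Fin n → ℝ | ∀ i, x i ∈ Set.Ioo (-1 : ℝ) 1} with hcube
  set bigset := (1 - lam) • K + lam • L + cube with hbig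
  have hKfin := lattice_finite n K hKb
  have hLfin := lattice_finite n L hLb
  set A := hKfin.toFinset with hA
  set B := hLfin.toFinset with hB
  have hKenum : latticeEnum n K = A.card := latticeEnum_eq n K hKfin
  have hLenum : latticeEnum n L = B.card := latticeEnum_eq n L hLfin
  by_cases hAne : A.Nonempty
  swap
  · rw [Finset.not_nonempty_iff_eq_empty] at hAne
    rw [ge_iff_le, hKenum, hAne, Finset.card_empty, Nat.cast_zero,
      Real.zero_rpow (by linarith), zero_mul]
    positivity
  by_cases hBne : B.Nonempty
  swap
  · rw [Finset.not_nonempty_iff_eq_empty] at hBne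
    rw [ge_iff_le, hLenum, hBne, Finset.card_empty, Nat.cast_zero,
      Real.zero_rpow (by linarith), mul_zero]
    positivity
  obtain ⟨S, hSmem, hScard⟩ := multiD lam h0 h1 n A B hAne hBne
  -- big set is bounded
  have hcube_b : Bornology.IsBounded cube := by
    apply Bornology.IsBounded.subset (Metric.isBounded_closedBall (x := (0 : Fin n → ℝ)) (r := 1))
    intro x hx
    rw [Metric.mem_closedBall, dist_zero_right]
    apply pi_norm_le_iff_of_nonneg zero_le_one |>.mpr
    intro i
    have := hx i
    rw [Set.mem_Ioo] at this
    rw [Real.norm_eq_abs, abs_le]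
    constructor <;> linarith [this.1, this.2]
  have hbig_b : Bornology.IsBounded bigset := by
    rw [hbig]
    exact ((hKb.smul₀ _).add (hLb.smul₀ _)).add hcube_b
  have hbigfin := lattice_finite n bigset hbig_b
  have hbigenum : latticeEnum n bigset = hbigfin.toFinset.card := latticeEnum_eq n bigset hbigfin
  -- S consists of lattice points of the big set
  have hsub : S ⊆ hbigfin.toFinset := by
    intro z hz
    obtain ⟨a, haA, b, hbB, hcl⟩ := hSmem z hz
    rw [Set.Finite.mem_toFinset]
    show iota n z ∈ bigset
    have haK : iota n a ∈ K := by
      have := (Set.Finite.mem_toFinset hKfin).mp haA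
      exact this
    have hbL : iota n b ∈ L := by
      have := (Set.Finite.mem_toFinset hLfin).mp hbB
      exact this
    rw [hbig]
    set r : Fin n → ℝ := iota n z - ((1 - lam) • iota n a + lam • iota n b) with hr
    have hrc : r ∈ cube := by
      intro i
      have h2 := hcl i
      rw [abs_lt] at h2
      have h3 : r i = (z i : ℝ) - ((1 - lam) * (a i : ℝ) + lam * (b i : ℝ)) := by
        rw [hr]
        simp [iota, smul_eq_mul]
      rw [Set.mem_Ioo, h3]
      constructor <;> linarith [h2.1, h2.2]
    have hmem1 : (1 - lam) • iota n a + lam • iota n b ∈ (1 - lam) • K + lam • L := by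
      exact Set.add_mem_add (Set.smul_mem_smul_set haK) (Set.smul_mem_smul_set hbL)
    have : iota n z = ((1 - lam) • iota n a + lam • iota n b) + r := by
      rw [hr]; abel
    rw [this]
    exact Set.add_mem_add hmem1 hrc
  have hcard_le : (S.card : ℝ) ≤ (latticeEnum n bigset : ℝ) := by
    rw [hbigenum]
    exact_mod_cast Finset.card_le_card hsub
  rw [ge_iff_le, hKenum, hLenum]
  calc (A.card : ℝ) ^ (1 - lam) * (B.card : ℝ) ^ lam
      ≤ (S.card : ℝ) := hScard
    _ ≤ (latticeEnum n bigset : ℝ) := hcard_le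
end
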